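/- arXiv:1402.6127 — 3 statements merged into one kernel-verified Lean document; each statement's English description precedes it below -/
import Mathlib

section
/- Let G : ℂ → ℂ be analytic in the strip {z : a < Im z < b} and continuous on its closure, bounded on the two boundary lines Im z = a and Im z = b by a constant M, and satisfying |G(z)| ≤ C·exp(ω(|Re z|)) on the strip where ω(p) = o(p). Then |G(z)| ≤ M for all z in the closed strip. -/
open Set Filter Topology

/-- Phragmén–Lindelöf maximum principle on a horizontal strip with subexponential
growth allowance exp(ω(|Re z|)), ω(p) = o(p). -/
theorem stmt_11 (a b M C : ℝ) (hab : a < b) (G : ℂ → ℂ) (ω : ℝ → ℝ)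
    (hanal : DifferentiableOn ℂ G {z | a < z.im ∧ z.im < b})
    (hcont : ContinuousOn G {z | a ≤ z.im ∧ z.im ≤ b})
    (hbdry : ∀ x : ℝ, ‖G (x + a * Complex.I)‖ ≤ M ∧
      ‖G (x + b * Complex.I)‖ ≤ M)
    (hgrow : ∀ z : ℂ, a ≤ z.im → z.im ≤ b → ‖G z‖ ≤ C * Real.exp (ω |z.re|))
    (hω : Tendsto (fun p => ω p / p) atTop (𝓝 0)) :
    ∀ z : ℂ, a ≤ z.im → z.im ≤ b → ‖G z‖ ≤ M := by
  intro z hza hzb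
  set c : ℝ := Real.pi / (2 * (b - a)) with hc_def
  have hba : (0:ℝ) < b - a := sub_pos.2 hab
  have hc : 0 < c := div_pos Real.pi_pos (by linarith)
  have hclt : c < Real.pi / (b - a) := by
    rw [hc_def, div_lt_div_iff₀ (by linarith) hba]
    nlinarith [Real.pi_pos]
  refine PhragmenLindelof.horizontal_strip (a := a) (b := b) ?_ ?_ ?_ ?_ hza hzb
  · refine ⟨hanal, hcont.mono ?_⟩
    refine (Complex.continuous_im.closure_preimage_subset _).trans ?_
    rw [closure_Ioo hab.ne]
    intro w hw; exact ⟨hw.1, hw.2⟩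
  · refine ⟨c, hclt, 1, Asymptotics.IsBigO.of_bound (max C 0) ?_⟩
    have h1 : ∀ᶠ p in atTop, ω p / p < c := hω.eventually (gt_mem_nhds hc)
    have h2 : ∀ᶠ p in atTop, ω p ≤ Real.exp (c * p) := by
      filter_upwards [h1, eventually_gt_atTop (0:ℝ)] with p hp hp0
      have : ω p < c * p := by
        rw [div_lt_iff₀ hp0] at hp; linarith
      have h3 : c * p ≤ Real.exp (c * p) := (Real.add_one_le_exp _).trans' (by linarith)
      linarith
    have h4 : ∀ᶠ w : ℂ in comap (_root_.abs ∘ Complex.re) atTop ⊓ 𝓟 (Complex.im ⁻¹' Ioo a b),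
        ω |w.re| ≤ Real.exp (c * |w.re|) := by
      refine Eventually.filter_mono inf_le_left ?_
      exact tendsto_comap.eventually h2
    filter_upwards [h4, Eventually.filter_mono inf_le_right (eventually_principal.2 fun w hw => hw)] with w hw hw'
    have him : a ≤ w.im ∧ w.im ≤ b := ⟨hw'.1.le, hw'.2.le⟩
    calc ‖G w‖ ≤ C * Real.exp (ω |w.re|) := hgrow w him.1 him.2
      _ ≤ max C 0 * Real.exp (1 * Real.exp (c * |w.re|)) := by
          have e1 : Real.exp (ω |w.re|) ≤ Real.exp (1 * Real.exp (c * |w.re|)) := by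
            rw [one_mul]; exact Real.exp_le_exp.2 hw
          have := Real.exp_pos (ω |w.re|)
          calc C * Real.exp (ω |w.re|) ≤ max C 0 * Real.exp (ω |w.re|) := by
                exact mul_le_mul_of_nonneg_right (le_max_left _ _) this.le
            _ ≤ max C 0 * Real.exp (1 * Real.exp (c * |w.re|)) :=
                mul_le_mul_of_nonneg_left e1 (le_max_right _ _)
      _ ≤ max C 0 * ‖Real.exp (1 * Real.exp (c * |w.re|))‖ := by
          rw [Real.norm_eq_abs, abs_of_pos (Real.exp_pos _)]
  · intro w hw
    have h := (hbdry w.re).1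
    have : (w.re : ℂ) + (a : ℂ) * Complex.I = w := by
      apply Complex.ext <;> simp [hw]
    rwa [this] at h
  · intro w hw
    have h := (hbdry w.re).2
    have : (w.re : ℂ) + (b : ℂ) * Complex.I = w := by
      apply Complex.ext <;> simp [hw]
    rwa [this] at h
end

section
/- Let S be analytic on the strip {0 < Im ζ < π}, continuous and bounded on the closure, with S(θ)⁻¹ = S(−θ) = conj(S(θ)) = S(θ + iπ) for all real θ. Define S on {−π < Im ζ < 0} by S(ζ) := S(ζ + iπ)⁻¹. Then S extends to a 2πi-periodic meromorphic function on all of ℂ. -/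
open Set Filter Topology Complex intervalIntegral MeasureTheory

/-- helper: uIcc of two members of an Icc is inside the Icc -/
lemma uIcc_subset_Icc' {p q u v : ℝ} (hu : u ∈ Icc p q) (hv : v ∈ Icc p q) :
    uIcc u v ⊆ Icc p q := by
  intro t ht
  rw [Set.mem_uIcc] at ht
  rcases ht with ⟨h1, h2⟩ | ⟨h1, h2⟩
  · exact ⟨hu.1.trans h1, h2.trans hv.2⟩
  · exact ⟨hv.1.trans h1, h2.trans hu.2⟩

/-- Morera/Schwarz gluing: a function continuous on an open set and complex-differentiable
off a horizontal line is analytic everywhere on the set. -/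
lemma moreraGlue {f : ℂ → ℂ} {c : ℝ} {U : Set ℂ} (hU : IsOpen U)
    (hf : ContinuousOn f U) (hd : ∀ z ∈ U, z.im ≠ c → DifferentiableAt ℂ f z)
    {z₀ : ℂ} (hz : z₀ ∈ U) : AnalyticAt ℂ f z₀ := by
  by_cases him : z₀.im = c
  case neg =>
    have hUo : IsOpen (U ∩ {w : ℂ | w.im ≠ c}) :=
      hU.inter (isOpen_compl_iff.mpr (isClosed_eq Complex.continuous_im continuous_const))
    have : DifferentiableOn ℂ f (U ∩ {w : ℂ | w.im ≠ c}) :=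
      fun w hw => (hd w hw.1 hw.2).differentiableWithinAt
    exact this.analyticAt (hUo.mem_nhds ⟨hz, him⟩)
  subst him
  obtain ⟨r, hr0, hrU⟩ := Metric.isOpen_iff.1 hU z₀ hz
  set δ : ℝ := r / 4 with hδdef
  have hδ0 : 0 < δ := by positivity
  set a : ℝ := z₀.re - δ with hadef
  set b : ℝ := z₀.re + δ with hbdef
  set a' : ℝ := z₀.im - δ with ha'def
  set b' : ℝ := z₀.im + δ with hb'def
  have hKU : Icc a b ×ℂ Icc a' b' ⊆ U := by
    intro w hw
    rw [Complex.mem_reProdIm] at hw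
    apply hrU
    rw [Metric.mem_ball, Complex.dist_eq]
    calc ‖w - z₀‖ ≤ |(w - z₀).re| + |(w - z₀).im| :=
          Complex.norm_le_abs_re_add_abs_im _
      _ ≤ δ + δ := by
          gcongr
          · rw [Complex.sub_re, abs_sub_le_iff]
            constructor <;> [linarith [hw.1.2, hbdef]; linarith [hw.1.1, hadef]]
          · rw [Complex.sub_im, abs_sub_le_iff]
            constructor <;> [linarith [hw.2.2, hb'def]; linarith [hw.2.1, ha'def]]
      _ < r := by rw [hδdef]; linarith
  -- membership of points on segments
  have hmem : ∀ x ∈ Icc a b, ∀ y ∈ Icc a' b', (↑x + ↑y * Complex.I) ∈ U := by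
    intro x hx y hy
    exact hKU (by rw [Complex.mem_reProdIm]; simp [hx, hy])
  -- integrability of vertical segments
  have hvert : ∀ x ∈ Icc a b, ∀ y ∈ Icc a' b', ∀ y' ∈ Icc a' b',
      IntervalIntegrable (fun s : ℝ => f (↑x + ↑s * Complex.I)) volume y y' := by
    intro x hx y hy y' hy'
    apply ContinuousOn.intervalIntegrable
    apply hf.comp
    · exact (continuous_const.add (Complex.continuous_ofReal.mul continuous_const)).continuousOn
    · intro s hs
      exact hmem x hx s (uIcc_subset_Icc' hy hy' hs)
  -- integrability of horizontal segments
  have hhor : ∀ y ∈ Icc a' b', ∀ x ∈ Icc a b, ∀ x' ∈ Icc a b,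
      IntervalIntegrable (fun t : ℝ => f (↑t + ↑y * Complex.I)) volume x x' := by
    intro y hy x hx x' hx'
    apply ContinuousOn.intervalIntegrable
    apply hf.comp
    · exact (Complex.continuous_ofReal.add continuous_const).continuousOn
    · intro t ht
      exact hmem t (uIcc_subset_Icc' hx hx' ht) y hy
  have hcIcc : z₀.im ∈ Icc a' b' := ⟨by rw [ha'def]; linarith, by rw [hb'def]; linarith⟩
  have hcabIcc : z₀.re ∈ Icc a b := ⟨by rw [hadef]; linarith, by rw [hbdef]; linarith⟩
  -- rectangle integral vanishing, same side of the line
  have hR0 : ∀ x ∈ Icc a b, ∀ x' ∈ Icc a b, ∀ y ∈ Icc a' b', ∀ y' ∈ Icc a' b',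
      ((z₀.im ≤ y ∧ z₀.im ≤ y') ∨ (y ≤ z₀.im ∧ y' ≤ z₀.im)) →
      (∫ t in x..x', f (↑t + ↑y * Complex.I)) - (∫ t in x..x', f (↑t + ↑y' * Complex.I)) +
        Complex.I * (∫ s in y..y', f (↑x' + ↑s * Complex.I)) -
        Complex.I * (∫ s in y..y', f (↑x + ↑s * Complex.I)) = 0 := by
    intro x hx x' hx' y hy y' hy' hside
    have e1 : (↑x + ↑y * Complex.I).re = x := by simp
    have e2 : (↑x + ↑y * Complex.I).im = y := by simp
    have e3 : (↑x' + ↑y' * Complex.I).re = x' := by simp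
    have e4 : (↑x' + ↑y' * Complex.I).im = y' := by simp
    have key := Complex.integral_boundary_rect_eq_zero_of_differentiable_on_off_countable f
      (↑x + ↑y * Complex.I) (↑x' + ↑y' * Complex.I) ∅ countable_empty ?_ ?_
    · rw [e1, e2, e3, e4] at key
      simpa [smul_eq_mul] using key
    · rw [e1, e2, e3, e4]
      exact hf.mono (fun w hw => by
        rw [Complex.mem_reProdIm] at hw
        exact hKU (by
          rw [Complex.mem_reProdIm]
          exact ⟨uIcc_subset_Icc' hx hx' hw.1, uIcc_subset_Icc' hy hy' hw.2⟩))
    · rw [e1, e2, e3, e4]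
      rintro w ⟨hw, -⟩
      rw [Complex.mem_reProdIm] at hw
      have hwU : w ∈ U := hKU (by
        rw [Complex.mem_reProdIm]
        refine ⟨⟨le_trans (le_inf hx.1 hx'.1) hw.1.1.le, hw.1.2.le.trans (sup_le hx.2 hx'.2)⟩,
          ⟨le_trans (le_inf hy.1 hy'.1) hw.2.1.le, hw.2.2.le.trans (sup_le hy.2 hy'.2)⟩⟩)
      apply hd w hwU
      rcases hside with ⟨h1, h2⟩ | ⟨h1, h2⟩
      · exact ne_of_gt (lt_of_le_of_lt (le_inf h1 h2) hw.2.1)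
      · exact ne_of_lt (lt_of_lt_of_le hw.2.2 (sup_le h1 h2))
  -- rectangle integral vanishing, general
  have hR : ∀ x ∈ Icc a b, ∀ x' ∈ Icc a b, ∀ y ∈ Icc a' b', ∀ y' ∈ Icc a' b',
      (∫ t in x..x', f (↑t + ↑y * Complex.I)) - (∫ t in x..x', f (↑t + ↑y' * Complex.I)) +
        Complex.I * (∫ s in y..y', f (↑x' + ↑s * Complex.I)) -
        Complex.I * (∫ s in y..y', f (↑x + ↑s * Complex.I)) = 0 := by
    intro x hx x' hx' y hy y' hy'
    have s1 := intervalIntegral.integral_add_adjacent_intervals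
      (hvert x' hx' y hy z₀.im hcIcc) (hvert x' hx' z₀.im hcIcc y' hy')
    have s2 := intervalIntegral.integral_add_adjacent_intervals
      (hvert x hx y hy z₀.im hcIcc) (hvert x hx z₀.im hcIcc y' hy')
    have h1 := hR0 x hx x' hx' y hy z₀.im hcIcc
      (by rcases le_total y z₀.im with h | h
          exacts [Or.inr ⟨h, le_refl _⟩, Or.inl ⟨h, le_refl _⟩])
    have h2 := hR0 x hx x' hx' z₀.im hcIcc y' hy'
      (by rcases le_total z₀.im y' with h | h
          exacts [Or.inl ⟨le_refl _, h⟩, Or.inr ⟨le_refl _, h⟩])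
    linear_combination h1 + h2 - Complex.I * s1 + Complex.I * s2
  -- the primitive
  set Q : Set ℂ := Ioo a b ×ℂ Ioo a' b' with hQdef
  have hQopen : IsOpen Q := isOpen_Ioo.reProdIm isOpen_Ioo
  have hQsub : Q ⊆ Icc a b ×ℂ Icc a' b' := fun w hw => by
    rw [Complex.mem_reProdIm] at hw ⊢
    exact ⟨Ioo_subset_Icc_self hw.1, Ioo_subset_Icc_self hw.2⟩
  set F : ℂ → ℂ := fun w =>
    (∫ t in z₀.re..w.re, f (↑t + ↑z₀.im * Complex.I)) +
      Complex.I * ∫ s in z₀.im..w.im, f (↑w.re + ↑s * Complex.I) with hFdef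
  have hdiff : ∀ w ∈ Icc a b ×ℂ Icc a' b', ∀ w' ∈ Icc a b ×ℂ Icc a' b',
      F w' - F w = (∫ t in w.re..w'.re, f (↑t + ↑w.im * Complex.I)) +
        Complex.I * ∫ s in w.im..w'.im, f (↑w'.re + ↑s * Complex.I) := by
    intro w hw w' hw'
    rw [Complex.mem_reProdIm] at hw hw'
    have s1 := intervalIntegral.integral_add_adjacent_intervals
      (hhor z₀.im hcIcc z₀.re hcabIcc w.re hw.1) (hhor z₀.im hcIcc w.re hw.1 w'.re hw'.1)
    have s2 := intervalIntegral.integral_add_adjacent_intervals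
      (hvert w'.re hw'.1 z₀.im hcIcc w.im hw.2) (hvert w'.re hw'.1 w.im hw.2 w'.im hw'.2)
    have h1 := hR w.re hw.1 w'.re hw'.1 z₀.im hcIcc w.im hw.2
    simp only [hFdef]
    linear_combination h1 - s1 - Complex.I * s2
  have hQU : Q ⊆ U := fun w hw => hKU (hQsub hw)
  have hder : ∀ w ∈ Q, HasDerivAt F (f w) w := by
    intro w hw
    rw [hasDerivAt_iff_isLittleO, Asymptotics.isLittleO_iff]
    intro ε hε
    have hcf : ContinuousAt f w := hf.continuousAt (hU.mem_nhds (hQU hw))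
    rcases Metric.continuousAt_iff.1 hcf (ε/2) (by positivity) with ⟨d, hd0, hdlt⟩
    filter_upwards [hQopen.mem_nhds hw, Metric.ball_mem_nhds w (show (0:ℝ) < d/2 by positivity)]
      with w' hw'Q hw'b
    have habs : ‖w' - w‖ < d / 2 := by
      rwa [Metric.mem_ball, Complex.dist_eq] at hw'b
    have hwK := hQsub hw
    have hw'K := hQsub hw'Q
    have hwK' := hwK; have hw'K' := hw'K
    rw [Complex.mem_reProdIm] at hwK' hw'K'
    have hform := hdiff w hwK w' hw'K
    have hrex : |w'.re - w.re| ≤ ‖w' - w‖ := by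
      simpa [Complex.sub_re] using Complex.abs_re_le_norm (w' - w)
    have himx : |w'.im - w.im| ≤ ‖w' - w‖ := by
      simpa [Complex.sub_im] using Complex.abs_im_le_norm (w' - w)
    have hrepr : F w' - F w - (w' - w) • f w =
        (∫ t in w.re..w'.re, (f (↑t + ↑w.im * Complex.I) - f w)) +
          Complex.I * ∫ s in w.im..w'.im, (f (↑w'.re + ↑s * Complex.I) - f w) := by
      rw [intervalIntegral.integral_sub (hhor w.im hwK'.2 w.re hwK'.1 w'.re hw'K'.1)
          intervalIntegrable_const,
        intervalIntegral.integral_sub (hvert w'.re hw'K'.1 w.im hwK'.2 w'.im hw'K'.2)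
          intervalIntegrable_const,
        intervalIntegral.integral_const, intervalIntegral.integral_const, hform]
      have hw'w : (w' - w) = ((w'.re - w.re : ℝ) : ℂ) + ((w'.im - w.im : ℝ) : ℂ) * Complex.I := by
        simp [Complex.ext_iff]
      rw [hw'w]
      simp only [Complex.real_smul, smul_eq_mul]
      ring
    rw [hrepr]
    have hb1 : ‖∫ t in w.re..w'.re, (f (↑t + ↑w.im * Complex.I) - f w)‖ ≤
        (ε/2) * |w'.re - w.re| := by
      apply intervalIntegral.norm_integral_le_of_norm_le_const
      intro t ht
      have ht' : |t - w.re| ≤ |w'.re - w.re| := by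
        rw [Set.mem_uIoc] at ht
        rcases ht with ⟨h1, h2⟩ | ⟨h1, h2⟩
        · rw [abs_of_pos (by linarith)]; linarith [le_abs_self (w'.re - w.re)]
        · rw [abs_of_nonpos (by linarith)]; linarith [neg_abs_le (w'.re - w.re)]
      have hdist : dist (↑t + ↑w.im * Complex.I) w < d := by
        rw [Complex.dist_eq]
        calc ‖↑t + ↑w.im * Complex.I - w‖
            ≤ |(↑t + ↑w.im * Complex.I - w).re| + |(↑t + ↑w.im * Complex.I - w).im| :=
              Complex.norm_le_abs_re_add_abs_im _
          _ = |t - w.re| := by simp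
          _ < d := by linarith [ht'.trans (hrex.trans habs.le)]
      exact (le_of_lt (by simpa [dist_eq_norm] using hdlt hdist))
    have hb2 : ‖∫ s in w.im..w'.im, (f (↑w'.re + ↑s * Complex.I) - f w)‖ ≤
        (ε/2) * |w'.im - w.im| := by
      apply intervalIntegral.norm_integral_le_of_norm_le_const
      intro s hs
      have hs' : |s - w.im| ≤ |w'.im - w.im| := by
        rw [Set.mem_uIoc] at hs
        rcases hs with ⟨h1, h2⟩ | ⟨h1, h2⟩
        · rw [abs_of_pos (by linarith)]; linarith [le_abs_self (w'.im - w.im)]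
        · rw [abs_of_nonpos (by linarith)]; linarith [neg_abs_le (w'.im - w.im)]
      have hdist : dist (↑w'.re + ↑s * Complex.I) w < d := by
        rw [Complex.dist_eq]
        calc ‖↑w'.re + ↑s * Complex.I - w‖
            ≤ |(↑w'.re + ↑s * Complex.I - w).re| + |(↑w'.re + ↑s * Complex.I - w).im| :=
              Complex.norm_le_abs_re_add_abs_im _
          _ = |w'.re - w.re| + |s - w.im| := by simp
          _ < d := by linarith [hrex.trans habs.le, hs'.trans (himx.trans habs.le)]
      exact (le_of_lt (by simpa [dist_eq_norm] using hdlt hdist))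
    calc ‖(∫ t in w.re..w'.re, (f (↑t + ↑w.im * Complex.I) - f w)) +
          Complex.I * ∫ s in w.im..w'.im, (f (↑w'.re + ↑s * Complex.I) - f w)‖
        ≤ ‖∫ t in w.re..w'.re, (f (↑t + ↑w.im * Complex.I) - f w)‖ +
          ‖Complex.I * ∫ s in w.im..w'.im, (f (↑w'.re + ↑s * Complex.I) - f w)‖ := norm_add_le _ _
      _ = ‖∫ t in w.re..w'.re, (f (↑t + ↑w.im * Complex.I) - f w)‖ +
          ‖∫ s in w.im..w'.im, (f (↑w'.re + ↑s * Complex.I) - f w)‖ := by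
          rw [norm_mul, Complex.norm_I, one_mul]
      _ ≤ (ε/2) * |w'.re - w.re| + (ε/2) * |w'.im - w.im| := add_le_add hb1 hb2
      _ ≤ (ε/2) * ‖w' - w‖ + (ε/2) * ‖w' - w‖ := by
          gcongr
      _ = ε * ‖w' - w‖ := by ring
  have hFdOn : DifferentiableOn ℂ F Q :=
    fun w hw => ((hder w hw).differentiableAt).differentiableWithinAt
  have hFan : AnalyticOnNhd ℂ F Q := hFdOn.analyticOnNhd hQopen
  have hz₀Q : z₀ ∈ Q := by
    rw [hQdef, Complex.mem_reProdIm]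
    exact ⟨⟨by rw [hadef]; linarith, by rw [hbdef]; linarith⟩,
      ⟨by rw [ha'def]; linarith, by rw [hb'def]; linarith⟩⟩
  have hder' : (deriv F) =ᶠ[nhds z₀] f := by
    filter_upwards [hQopen.mem_nhds hz₀Q] with w hw using (hder w hw).deriv
  exact ((hFan.deriv) z₀ hz₀Q).congr hder'

/-- gluing two functions across a horizontal line -/
lemma glueAux {c : ℝ} {u v : ℂ → ℂ} {s : Set ℂ} (hs : IsOpen s)
    (hu : ContinuousOn u (s ∩ {w : ℂ | c ≤ w.im}))
    (hv : ContinuousOn v (s ∩ {w : ℂ | w.im ≤ c}))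
    (huv : ∀ w ∈ s, w.im = c → u w = v w)
    (hud : ∀ w ∈ s, c < w.im → DifferentiableAt ℂ u w)
    (hvd : ∀ w ∈ s, w.im < c → DifferentiableAt ℂ v w)
    {z₀ : ℂ} (hz : z₀ ∈ s) :
    AnalyticAt ℂ (fun w => if c ≤ w.im then u w else v w) z₀ := by
  have hOl : IsOpen (s ∩ {w : ℂ | w.im < c}) :=
    hs.inter (isOpen_lt Complex.continuous_im continuous_const)
  have hOu : IsOpen (s ∩ {w : ℂ | c < w.im}) :=
    hs.inter (isOpen_lt continuous_const Complex.continuous_im)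
  apply moreraGlue (c := c) hs ?_ ?_ hz
  · -- continuity
    intro w hw
    rcases lt_trichotomy w.im c with h | h | h
    · have hvw : ContinuousAt v w :=
        hv.continuousAt (Filter.mem_of_superset (hOl.mem_nhds ⟨hw, h⟩)
          (fun y hy => ⟨hy.1, show y.im ≤ c from le_of_lt hy.2⟩))
      refine (hvw.congr ?_).continuousWithinAt
      filter_upwards [hOl.mem_nhds ⟨hw, h⟩] with y hy
      exact (if_neg (not_le.mpr hy.2)).symm
    · have hA : ContinuousWithinAt (fun w => if c ≤ w.im then u w else v w)
          (s ∩ {w : ℂ | c ≤ w.im}) w := by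
        refine (hu w ⟨hw, le_of_eq h.symm⟩).congr (fun y hy => if_pos hy.2) ?_
        exact if_pos (le_of_eq h.symm)
      have hB : ContinuousWithinAt (fun w => if c ≤ w.im then u w else v w)
          (s ∩ {w : ℂ | w.im ≤ c}) w := by
        refine (hv w ⟨hw, le_of_eq h⟩).congr (fun y hy => ?_) ?_
        · by_cases hyc : c ≤ y.im
          · rw [if_pos hyc]; exact huv y hy.1 (le_antisymm hy.2 hyc)
          · rw [if_neg hyc]
        · rw [if_pos (le_of_eq h.symm)]; exact huv w hw h
      refine (hA.union hB).mono (fun y hy => ?_)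
      rcases le_total c y.im with h' | h'
      exacts [Or.inl ⟨hy, h'⟩, Or.inr ⟨hy, h'⟩]
    · have huw : ContinuousAt u w :=
        hu.continuousAt (Filter.mem_of_superset (hOu.mem_nhds ⟨hw, h⟩)
          (fun y hy => ⟨hy.1, show c ≤ y.im from le_of_lt hy.2⟩))
      refine (huw.congr ?_).continuousWithinAt
      filter_upwards [hOu.mem_nhds ⟨hw, h⟩] with y hy
      exact (if_pos (le_of_lt hy.2)).symm
  · -- differentiability off the line
    intro w hw hne
    rcases hne.lt_or_gt with h | h
    · apply (hvd w hw h).congr_of_eventuallyEq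
      filter_upwards [hOl.mem_nhds ⟨hw, h⟩] with y hy
      exact if_neg (not_le.mpr hy.2)
    · apply (hud w hw h).congr_of_eventuallyEq
      filter_upwards [hOu.mem_nhds ⟨hw, h⟩] with y hy
      exact if_pos (le_of_lt hy.2)

/-- nonvanishing neighborhood within the closed strip -/
lemma SneNbhd {S : ℂ → ℂ}
    (hcont : ContinuousOn S {ζ | 0 ≤ ζ.im ∧ ζ.im ≤ Real.pi})
    (p : ℂ) (hp : 0 ≤ p.im ∧ p.im ≤ Real.pi) (hne : S p ≠ 0) :
    ∃ ε > 0, ∀ w : ℂ, 0 ≤ w.im → w.im ≤ Real.pi → ‖w - p‖ < ε → S w ≠ 0 := by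
  have h1 : ContinuousWithinAt S {ζ : ℂ | 0 ≤ ζ.im ∧ ζ.im ≤ Real.pi} p := hcont p hp
  have h2 : {z : ℂ | z ≠ 0} ∈ 𝓝 (S p) := by
    exact IsOpen.mem_nhds isOpen_ne hne
  have h3 : S ⁻¹' {z : ℂ | z ≠ 0} ∈ 𝓝[{ζ : ℂ | 0 ≤ ζ.im ∧ ζ.im ≤ Real.pi}] p := h1 h2
  rw [Metric.mem_nhdsWithin_iff] at h3
  obtain ⟨ε, hε, hsub⟩ := h3
  refine ⟨ε, hε, fun w h0 hπ hlt => ?_⟩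
  exact hsub ⟨Metric.mem_ball.2 (by rw [Complex.dist_eq]; exact hlt), ⟨h0, hπ⟩⟩

/-- real continuity of S along the real line -/
lemma ScontReal {S : ℂ → ℂ}
    (hcont : ContinuousOn S {ζ | 0 ≤ ζ.im ∧ ζ.im ≤ Real.pi}) (x : ℝ) :
    ContinuousAt (fun θ : ℝ => S (θ : ℂ)) x := by
  have h1 : ContinuousWithinAt (fun θ : ℝ => S (θ : ℂ)) Set.univ x := by
    apply ContinuousWithinAt.comp (hcont (x : ℂ) ⟨by simp, by simp [Real.pi_pos.le]⟩)
      Complex.continuous_ofReal.continuousWithinAt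
    intro θ _
    exact ⟨by simp, by simp [Real.pi_pos.le]⟩
  rwa [continuousWithinAt_univ] at h1

/-- if S vanishes at a real point, it vanishes on a real neighborhood -/
lemma SzeroNear {S : ℂ → ℂ}
    (hcont : ContinuousOn S {ζ | 0 ≤ ζ.im ∧ ζ.im ≤ Real.pi})
    (hrel : ∀ θ : ℝ, (S θ)⁻¹ = S (-θ) ∧ S (-θ) = starRingEnd ℂ (S θ) ∧
      starRingEnd ℂ (S θ) = S ((θ : ℂ) + Real.pi * Complex.I))
    (x : ℝ) (hx : S x = 0) : ∃ δ > 0, ∀ θ : ℝ, |θ - x| < δ → S (θ : ℂ) = 0 := by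
  have hc := ScontReal hcont x
  rcases Metric.continuousAt_iff.1 hc (1/2) (by norm_num) with ⟨δ, hδ0, hδ⟩
  refine ⟨δ, hδ0, fun θ hθ => ?_⟩
  by_contra hne
  have hd : dist (S (θ:ℂ)) (S (x:ℂ)) < 1/2 := hδ (by rwa [Real.dist_eq])
  rw [hx, dist_zero_right] at hd
  have hkey : (S (θ:ℂ))⁻¹ = starRingEnd ℂ (S (θ:ℂ)) := (hrel θ).1.trans (hrel θ).2.1
  have h1 : S (θ:ℂ) * starRingEnd ℂ (S (θ:ℂ)) = 1 := by
    rw [← hkey]; exact mul_inv_cancel₀ hne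
  rw [Complex.mul_conj] at h1
  have h2 : Complex.normSq (S (θ:ℂ)) = 1 := by exact_mod_cast h1
  have h3 : ‖S (θ:ℂ)‖ = 1 := by
    rw [← Complex.sq_norm] at h2
    nlinarith [norm_nonneg (S (θ:ℂ))]
  rw [h3] at hd
  norm_num at hd

/-- S(θ+iπ) = (S θ)⁻¹ -/
lemma Srel {S : ℂ → ℂ}
    (hrel : ∀ θ : ℝ, (S θ)⁻¹ = S (-θ) ∧ S (-θ) = starRingEnd ℂ (S θ) ∧
      starRingEnd ℂ (S θ) = S ((θ : ℂ) + Real.pi * Complex.I)) (θ : ℝ) :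
    (S (θ:ℂ))⁻¹ = S ((θ : ℂ) + Real.pi * Complex.I) :=
  (hrel θ).1.trans ((hrel θ).2.1.trans (hrel θ).2.2)

lemma Srel' {S : ℂ → ℂ}
    (hrel : ∀ θ : ℝ, (S θ)⁻¹ = S (-θ) ∧ S (-θ) = starRingEnd ℂ (S θ) ∧
      starRingEnd ℂ (S θ) = S ((θ : ℂ) + Real.pi * Complex.I)) (θ : ℝ) :
    (S ((θ : ℂ) + Real.pi * Complex.I))⁻¹ = S (θ:ℂ) := by
  rw [← Srel hrel θ, inv_inv]

/-- if S vanishes at a real point, it vanishes near that point in the upper closed half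
plane and near the corresponding point of the top boundary line -/
lemma SvanishUpper {S : ℂ → ℂ}
    (hanal : DifferentiableOn ℂ S {ζ | 0 < ζ.im ∧ ζ.im < Real.pi})
    (hcont : ContinuousOn S {ζ | 0 ≤ ζ.im ∧ ζ.im ≤ Real.pi})
    (hrel : ∀ θ : ℝ, (S θ)⁻¹ = S (-θ) ∧ S (-θ) = starRingEnd ℂ (S θ) ∧
      starRingEnd ℂ (S θ) = S ((θ : ℂ) + Real.pi * Complex.I))
    (x : ℝ) (hx : S x = 0) :
    ∃ ρ > 0, (∀ w : ℂ, 0 ≤ w.im → ‖w - x‖ < ρ → S w = 0) ∧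
      (∀ w : ℂ, w.im ≤ Real.pi → ‖w - ((x:ℂ) + Real.pi * Complex.I)‖ < ρ → S w = 0) := by
  have hπ : (0:ℝ) < Real.pi := Real.pi_pos
  obtain ⟨δ, hδ0, hδ⟩ := SzeroNear hcont hrel x hx
  have hOpen : IsOpen {ζ : ℂ | 0 < ζ.im ∧ ζ.im < Real.pi} := by
    have : {ζ : ℂ | 0 < ζ.im ∧ ζ.im < Real.pi} =
        {ζ : ℂ | 0 < ζ.im} ∩ {ζ : ℂ | ζ.im < Real.pi} := rfl
    rw [this]
    exact (isOpen_lt continuous_const Complex.continuous_im).inter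
      (isOpen_lt Complex.continuous_im continuous_const)
  set r : ℝ := min δ Real.pi with hrdef
  have hr0 : (0:ℝ) < r := lt_min hδ0 hπ
  have hrδ : r ≤ δ := min_le_left _ _
  have hrπ : r ≤ Real.pi := min_le_right _ _
  -- part (a) : gluing S with 0 across the real axis near x
  have keyA : AnalyticAt ℂ (fun w : ℂ => if (0:ℝ) ≤ w.im then S w else 0) (x:ℂ) := by
    apply glueAux (c := 0) (u := S) (v := fun _ => 0) (s := Metric.ball (x:ℂ) r)
      Metric.isOpen_ball ?_ continuousOn_const ?_ ?_ (fun _ _ _ => differentiableAt_const 0)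
      (Metric.mem_ball_self hr0)
    · apply hcont.mono
      rintro y ⟨hy1, hy2⟩
      rw [Metric.mem_ball, Complex.dist_eq] at hy1
      refine ⟨hy2, ?_⟩
      have him : |y.im| ≤ ‖y - (x:ℂ)‖ := by
        simpa using Complex.abs_im_le_norm (y - (x:ℂ))
      have : |y.im| < Real.pi := lt_of_le_of_lt him (lt_of_lt_of_le hy1 hrπ)
      exact le_of_lt (lt_of_le_of_lt (le_abs_self _) this)
    · intro w hw him
      have hwre : w = (w.re : ℂ) := Complex.ext rfl (by simpa using him)
      rw [Metric.mem_ball, Complex.dist_eq] at hw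
      have : ‖(w.re : ℂ) - (x:ℂ)‖ < δ := by
        rw [← hwre]; exact lt_of_lt_of_le hw hrδ
      rw [← Complex.ofReal_sub, Complex.norm_real, Real.norm_eq_abs] at this
      rw [hwre]
      exact hδ w.re this
    · intro w hw h0
      rw [Metric.mem_ball, Complex.dist_eq] at hw
      apply (hanal.differentiableAt (hOpen.mem_nhds ?_))
      refine ⟨h0, ?_⟩
      have him : |w.im| ≤ ‖w - (x:ℂ)‖ := by
        simpa using Complex.abs_im_le_norm (w - (x:ℂ))
      exact lt_of_le_of_lt (le_abs_self _) (lt_of_le_of_lt him (lt_of_lt_of_le hw hrπ))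
  -- frequently zero from below
  have hseqA : Filter.Tendsto (fun n : ℕ => (x:ℂ) - (1/(n+1) : ℝ) * Complex.I)
      Filter.atTop (𝓝[≠] (x:ℂ)) := by
    have h0 : Filter.Tendsto (fun n : ℕ => (1:ℝ)/(n+1)) Filter.atTop (𝓝 0) :=
      tendsto_one_div_add_atTop_nhds_zero_nat
    have hc : Continuous (fun t : ℝ => (x:ℂ) - (t:ℂ) * Complex.I) := by continuity
    have h2 := (hc.tendsto 0).comp h0
    simp only [Function.comp_def] at h2
    rw [show (x:ℂ) - ((0:ℝ):ℂ) * Complex.I = (x:ℂ) by simp] at h2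
    apply tendsto_nhdsWithin_of_tendsto_nhds_of_eventually_within _ h2
    apply Filter.Eventually.of_forall
    intro n
    simp only [Set.mem_compl_iff, Set.mem_singleton_iff]
    rw [sub_eq_self]
    apply mul_ne_zero
    · rw [Complex.ofReal_ne_zero]
      positivity
    · exact Complex.I_ne_zero
  have hfreqA : ∃ᶠ z in 𝓝[≠] (x:ℂ), (fun w : ℂ => if (0:ℝ) ≤ w.im then S w else 0) z = 0 := by
    apply hseqA.frequently
    apply Filter.Frequently.of_forall
    intro n
    have him : ∀ t : ℝ, ((x:ℂ) - (t:ℂ) * Complex.I).im = -t := fun t => by simp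
    show (if (0:ℝ) ≤ ((x:ℂ) - ((1/(n+1) : ℝ):ℂ) * Complex.I).im then
      S ((x:ℂ) - ((1/(n+1) : ℝ):ℂ) * Complex.I) else 0) = 0
    rw [if_neg]
    rw [him, not_le, neg_lt, neg_zero]
    positivity
  have hevA := (keyA.frequently_zero_iff_eventually_zero).1 hfreqA
  obtain ⟨ρ₁, hρ₁0, hballA⟩ := Metric.eventually_nhds_iff_ball.1 hevA
  -- part (b) : gluing 0 with S across the top line near x + iπ
  set p : ℂ := (x:ℂ) + Real.pi * Complex.I with hpdef
  have hpim : p.im = Real.pi := by simp [hpdef]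
  have hpre : p.re = x := by simp [hpdef]
  have keyB : AnalyticAt ℂ (fun w : ℂ => if Real.pi ≤ w.im then 0 else S w) p := by
    apply glueAux (c := Real.pi) (u := fun _ => 0) (v := S) (s := Metric.ball p r)
      Metric.isOpen_ball continuousOn_const ?_ ?_ (fun _ _ _ => differentiableAt_const 0) ?_
      (Metric.mem_ball_self hr0)
    · apply hcont.mono
      rintro y ⟨hy1, hy2⟩
      rw [Metric.mem_ball, Complex.dist_eq] at hy1
      refine ⟨?_, hy2⟩
      have him : |y.im - Real.pi| ≤ ‖y - p‖ := by
        have := Complex.abs_im_le_norm (y - p)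
        simpa [hpim] using this
      have h2 : Real.pi - y.im < Real.pi := by
        have := lt_of_le_of_lt him (lt_of_lt_of_le hy1 hrπ)
        rw [abs_sub_lt_iff] at this
        linarith [this.2]
      linarith
    · intro w hw him
      have hwre : w = (w.re : ℂ) + Real.pi * Complex.I := by
        apply Complex.ext
        · simp
        · simp [him]
      rw [Metric.mem_ball, Complex.dist_eq] at hw
      have hre : ‖(w.re : ℂ) - (x:ℂ)‖ < δ := by
        have : w - p = ((w.re : ℂ) - (x:ℂ)) := by
          rw [hpdef]
          nth_rewrite 1 [hwre]
          ring
        rw [this] at hw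
        exact lt_of_lt_of_le hw hrδ
      rw [← Complex.ofReal_sub, Complex.norm_real, Real.norm_eq_abs] at hre
      have hz : S (w.re : ℂ) = 0 := hδ w.re hre
      rw [hwre, ← Srel hrel w.re, hz, inv_zero]
    · intro w hw him
      rw [Metric.mem_ball, Complex.dist_eq] at hw
      apply (hanal.differentiableAt (hOpen.mem_nhds ?_))
      refine ⟨?_, him⟩
      have h1 : |w.im - Real.pi| ≤ ‖w - p‖ := by
        have := Complex.abs_im_le_norm (w - p)
        simpa [hpim] using this
      have h2 := lt_of_le_of_lt h1 (lt_of_lt_of_le hw hrπ)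
      rw [abs_sub_lt_iff] at h2
      linarith [h2.2]
  have hseqB : Filter.Tendsto (fun n : ℕ => p + (1/(n+1) : ℝ) * Complex.I)
      Filter.atTop (𝓝[≠] p) := by
    have h0 : Filter.Tendsto (fun n : ℕ => (1:ℝ)/(n+1)) Filter.atTop (𝓝 0) :=
      tendsto_one_div_add_atTop_nhds_zero_nat
    have hc : Continuous (fun t : ℝ => p + (t:ℂ) * Complex.I) := by continuity
    have h2 := (hc.tendsto 0).comp h0
    simp only [Function.comp_def] at h2
    rw [show p + ((0:ℝ):ℂ) * Complex.I = p by simp] at h2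
    apply tendsto_nhdsWithin_of_tendsto_nhds_of_eventually_within _ h2
    apply Filter.Eventually.of_forall
    intro n
    simp only [Set.mem_compl_iff, Set.mem_singleton_iff]
    rw [add_eq_left]
    apply mul_ne_zero
    · rw [Complex.ofReal_ne_zero]
      positivity
    · exact Complex.I_ne_zero
  have hfreqB : ∃ᶠ z in 𝓝[≠] p, (fun w : ℂ => if Real.pi ≤ w.im then 0 else S w) z = 0 := by
    apply hseqB.frequently
    apply Filter.Frequently.of_forall
    intro n
    have him : ∀ t : ℝ, (p + (t:ℂ) * Complex.I).im = Real.pi + t := fun t => by simp [hpim]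
    show (if Real.pi ≤ (p + ((1/(n+1) : ℝ):ℂ) * Complex.I).im then 0 else
      S (p + ((1/(n+1) : ℝ):ℂ) * Complex.I)) = 0
    rw [if_pos]
    rw [him]
    have : (0:ℝ) < 1/(n+1) := by positivity
    linarith
  have hevB := (keyB.frequently_zero_iff_eventually_zero).1 hfreqB
  obtain ⟨ρ₂, hρ₂0, hballB⟩ := Metric.eventually_nhds_iff_ball.1 hevB
  -- conclusion
  refine ⟨min (min ρ₁ ρ₂) r, by positivity, ?_, ?_⟩
  · intro w h0 hlt
    have hw : w ∈ Metric.ball (x:ℂ) ρ₁ := by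
      rw [Metric.mem_ball, Complex.dist_eq]
      exact lt_of_lt_of_le hlt (le_trans (min_le_left _ _) (min_le_left _ _))
    have := hballA w hw
    rwa [if_pos h0] at this
  · intro w hπ' hlt
    have hltp : ‖w - p‖ < min (min ρ₁ ρ₂) r := by rw [hpdef]; exact hlt
    have hw : w ∈ Metric.ball p ρ₂ := by
      rw [Metric.mem_ball, Complex.dist_eq]
      exact lt_of_lt_of_le hltp (le_trans (min_le_left _ _) (min_le_right _ _))
    have hB := hballB w hw
    rcases lt_or_eq_of_le hπ' with h | h
    · rwa [if_neg (not_le.2 h)] at hB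
    · -- w on the top line
      have hwre : w = (w.re : ℂ) + Real.pi * Complex.I := by
        apply Complex.ext
        · simp
        · simp [h]
      have hre : |w.re - x| < δ := by
        have heq : w - p = ((w.re : ℂ) - (x:ℂ)) := by
          rw [hpdef]
          nth_rewrite 1 [hwre]
          ring
        have : ‖w - p‖ < δ :=
          lt_of_lt_of_le hltp (le_trans (min_le_right _ _) hrδ)
        rwa [heq, ← Complex.ofReal_sub, Complex.norm_real, Real.norm_eq_abs] at this
      rw [hwre, ← Srel hrel w.re, hδ w.re hre, inv_zero]

/-- A scattering function S extends, via S(ζ) := S(ζ+iπ)⁻¹ on the lower strip, to a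
2πi-periodic meromorphic function on all of ℂ. -/
theorem stmt_14 (S : ℂ → ℂ)
    (hanal : DifferentiableOn ℂ S {ζ | 0 < ζ.im ∧ ζ.im < Real.pi})
    (hcont : ContinuousOn S {ζ | 0 ≤ ζ.im ∧ ζ.im ≤ Real.pi})
    (hbdd : ∃ M, ∀ ζ ∈ {ζ : ℂ | 0 ≤ ζ.im ∧ ζ.im ≤ Real.pi}, ‖S ζ‖ ≤ M)
    (hrel : ∀ θ : ℝ, (S θ)⁻¹ = S (-θ) ∧ S (-θ) = starRingEnd ℂ (S θ) ∧
      starRingEnd ℂ (S θ) = S ((θ : ℂ) + Real.pi * Complex.I)) :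
    ∃ T : ℂ → ℂ,
      (∀ ζ : ℂ, 0 ≤ ζ.im → ζ.im ≤ Real.pi → T ζ = S ζ) ∧
      (∀ ζ : ℂ, -Real.pi < ζ.im → ζ.im < 0 → T ζ = (S (ζ + Real.pi * Complex.I))⁻¹) ∧
      (∀ ζ : ℂ, T (ζ + 2 * Real.pi * Complex.I) = T ζ) ∧
      MeromorphicOn T Set.univ := by
  have hπ : (0:ℝ) < Real.pi := Real.pi_pos
  have hOpen : IsOpen {ζ : ℂ | 0 < ζ.im ∧ ζ.im < Real.pi} := by
    have : {ζ : ℂ | 0 < ζ.im ∧ ζ.im < Real.pi} =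
        {ζ : ℂ | 0 < ζ.im} ∩ {ζ : ℂ | ζ.im < Real.pi} := rfl
    rw [this]
    exact (isOpen_lt continuous_const Complex.continuous_im).inter
      (isOpen_lt Complex.continuous_im continuous_const)
  set k : ℂ → ℤ := fun ζ => ⌊(ζ.im + Real.pi) / (2 * Real.pi)⌋ with hkdef
  set T : ℂ → ℂ := fun ζ =>
    if 0 ≤ ζ.im - 2 * Real.pi * ((k ζ : ℤ) : ℝ) then
      S (ζ - ((2 * Real.pi * ((k ζ : ℤ) : ℝ) : ℝ) : ℂ) * Complex.I)
    else (S (ζ - ((2 * Real.pi * ((k ζ : ℤ) : ℝ) : ℝ) : ℂ) * Complex.I + Real.pi * Complex.I))⁻¹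
    with hTdef
  -- basic floor facts
  have hk0 : ∀ ζ : ℂ, -Real.pi ≤ ζ.im → ζ.im < Real.pi → k ζ = 0 := by
    intro ζ h1 h2
    rw [hkdef]
    simp only
    rw [Int.floor_eq_zero_iff]
    constructor
    · exact div_nonneg (by linarith) (by positivity)
    · rw [div_lt_one (by positivity)]; linarith
  have hT1 : ∀ ζ : ℂ, 0 ≤ ζ.im → ζ.im < Real.pi → T ζ = S ζ := by
    intro ζ h1 h2
    have hk := hk0 ζ (by linarith) h2
    rw [hTdef]
    simp only [hk, Int.cast_zero, mul_zero, sub_zero, Complex.ofReal_zero, zero_mul]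
    rw [if_pos h1]
  have hT2 : ∀ ζ : ℂ, -Real.pi ≤ ζ.im → ζ.im < 0 →
      T ζ = (S (ζ + Real.pi * Complex.I))⁻¹ := by
    intro ζ h1 h2
    have hk := hk0 ζ h1 (by linarith)
    rw [hTdef]
    simp only [hk, Int.cast_zero, mul_zero, sub_zero, Complex.ofReal_zero, zero_mul]
    rw [if_neg (not_le.2 h2)]
  have hTpi : ∀ ζ : ℂ, ζ.im = Real.pi → T ζ = S ζ := by
    intro ζ h
    have hk1 : k ζ = 1 := by
      rw [hkdef]
      simp only [h]
      rw [show (Real.pi + Real.pi) / (2 * Real.pi) = 1 by field_simp; ring]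
      exact Int.floor_one
    rw [hTdef]
    simp only [hk1, Int.cast_one, mul_one]
    rw [if_neg (by rw [h]; push_neg; linarith)]
    have harg : ζ - ((2 * Real.pi : ℝ) : ℂ) * Complex.I + Real.pi * Complex.I
        = ((ζ.re : ℝ) : ℂ) := by
      apply Complex.ext
      · simp
      · simp [h]; ring
    rw [harg, Srel hrel ζ.re]
    congr 1
    apply Complex.ext
    · simp
    · simp [h]
  have hTper : ∀ ζ : ℂ, T (ζ + 2 * Real.pi * Complex.I) = T ζ := by
    intro ζ
    have him : (ζ + 2 * (Real.pi:ℂ) * Complex.I).im = ζ.im + 2 * Real.pi := by simp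
    have hkper : k (ζ + 2 * (Real.pi:ℂ) * Complex.I) = k ζ + 1 := by
      rw [hkdef]
      simp only [him]
      rw [show (ζ.im + 2 * Real.pi + Real.pi) / (2 * Real.pi)
          = (ζ.im + Real.pi) / (2 * Real.pi) + 1 by field_simp; ring]
      exact Int.floor_add_one _
    have harg : (ζ + 2 * (Real.pi:ℂ) * Complex.I) -
        ((2 * Real.pi * ((k (ζ + 2 * (Real.pi:ℂ) * Complex.I) : ℤ) : ℝ) : ℝ) : ℂ) * Complex.I
        = ζ - ((2 * Real.pi * ((k ζ : ℤ) : ℝ) : ℝ) : ℂ) * Complex.I := by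
      rw [hkper]
      push_cast
      ring
    have hcond : (ζ + 2 * (Real.pi:ℂ) * Complex.I).im -
        2 * Real.pi * ((k (ζ + 2 * (Real.pi:ℂ) * Complex.I) : ℤ) : ℝ)
        = ζ.im - 2 * Real.pi * ((k ζ : ℤ) : ℝ) := by
      rw [hkper, him]
      push_cast
      ring
    rw [hTdef]
    simp only
    rw [harg, hcond]
  have hTperZ : ∀ (n : ℤ) (ζ : ℂ), T (ζ + (n : ℂ) * (2 * (Real.pi:ℂ) * Complex.I)) = T ζ := by
    intro n
    induction n using Int.induction_on with
    | zero => intro ζ; simp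
    | succ i ih =>
        intro ζ
        have ih' := ih ζ
        push_cast at ih' ⊢
        rw [show ζ + ((i:ℂ) + 1) * (2 * (Real.pi:ℂ) * Complex.I)
            = (ζ + (i:ℂ) * (2 * (Real.pi:ℂ) * Complex.I)) + 2 * (Real.pi:ℂ) * Complex.I
            from by ring, hTper, ih']
    | pred i ih =>
        intro ζ
        have ih' := ih ζ
        push_cast at ih' ⊢
        have h2 := hTper (ζ + (-(i:ℂ) - 1) * (2 * (Real.pi:ℂ) * Complex.I))
        rw [show ζ + (-(i:ℂ) - 1) * (2 * (Real.pi:ℂ) * Complex.I) + 2 * (Real.pi:ℂ) * Complex.I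
            = ζ + (-(i:ℂ)) * (2 * (Real.pi:ℂ) * Complex.I) from by ring] at h2
        rw [← h2]
        exact ih'
  refine ⟨T, ?_, ?_, hTper, ?_⟩
  · intro ζ h1 h2
    rcases lt_or_eq_of_le h2 with h | h
    exacts [hT1 ζ h1 h, hTpi ζ h]
  · intro ζ h1 h2
    exact hT2 ζ h1.le h2
  -- meromorphy
  intro z _
  have main : ∀ w : ℂ, -Real.pi ≤ w.im → w.im < Real.pi → MeromorphicAt T w := by
    intro w hw1 hw2
    rcases lt_or_eq_of_le hw1 with hgt | heqm
    · rcases lt_trichotomy w.im 0 with h0 | h0 | h0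
      · -- lower open strip
        have himw : (w + (Real.pi:ℂ) * Complex.I).im = w.im + Real.pi := by simp
        have hmem : w + (Real.pi:ℂ) * Complex.I ∈ {ζ : ℂ | 0 < ζ.im ∧ ζ.im < Real.pi} :=
          ⟨by rw [himw]; linarith, by rw [himw]; linarith⟩
        have hSan : AnalyticAt ℂ (fun y : ℂ => S (y + (Real.pi:ℂ) * Complex.I)) w := by
          have h1 : AnalyticAt ℂ S (w + (Real.pi:ℂ) * Complex.I) :=
            hanal.analyticAt (hOpen.mem_nhds hmem)
          have htr : AnalyticAt ℂ (fun y : ℂ => y + (Real.pi:ℂ) * Complex.I) w := by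
            exact analyticAt_id.add analyticAt_const
          exact h1.comp_of_eq htr rfl
        have hmer := hSan.meromorphicAt.inv
        apply hmer.congr
        have hOl : IsOpen {ζ : ℂ | -Real.pi < ζ.im ∧ ζ.im < 0} := by
          have : {ζ : ℂ | -Real.pi < ζ.im ∧ ζ.im < 0} =
              {ζ : ℂ | -Real.pi < ζ.im} ∩ {ζ : ℂ | ζ.im < 0} := rfl
          rw [this]
          exact (isOpen_lt continuous_const Complex.continuous_im).inter
            (isOpen_lt Complex.continuous_im continuous_const)
        have hev : ∀ᶠ y in 𝓝 w, (fun y : ℂ => S (y + (Real.pi:ℂ) * Complex.I))⁻¹ y = T y := by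
          filter_upwards [hOl.mem_nhds ⟨hgt, h0⟩] with y hy
          rw [Pi.inv_apply, hT2 y hy.1.le hy.2]
        exact hev.filter_mono nhdsWithin_le_nhds
      · -- on the real line
        by_cases hS0 : S ((w.re : ℝ) : ℂ) = 0
        · obtain ⟨ρ, hρ0, hlow, hup⟩ := SvanishUpper hanal hcont hrel w.re hS0
          have hwre : w = ((w.re : ℝ) : ℂ) := Complex.ext rfl (by simp [h0])
          have hzero : (fun _ : ℂ => (0:ℂ)) =ᶠ[𝓝 w] T := by
            filter_upwards [Metric.ball_mem_nhds w
              (show (0:ℝ) < min ρ Real.pi by positivity)] with y hy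
            rw [Metric.mem_ball, Complex.dist_eq] at hy
            have hyρ : ‖y - w‖ < ρ := lt_of_lt_of_le hy (min_le_left _ _)
            have hyim : |y.im| ≤ ‖y - w‖ := by
              simpa [Complex.sub_im, h0] using Complex.abs_im_le_norm (y - w)
            have hyπ : |y.im| < Real.pi :=
              lt_of_le_of_lt hyim (lt_of_lt_of_le hy (min_le_right _ _))
            rcases le_or_gt 0 y.im with hy0 | hy0
            · rw [hT1 y hy0 (lt_of_le_of_lt (le_abs_self _) hyπ)]
              exact (hlow y hy0 (by rw [← hwre]; exact hyρ)).symm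
            · rw [hT2 y (by have := (abs_lt.1 hyπ).1; linarith) hy0]
              have hS0' : S (y + (Real.pi:ℂ) * Complex.I) = 0 := by
                apply hup
                · have : (y + (Real.pi:ℂ) * Complex.I).im = y.im + Real.pi := by simp
                  rw [this]; linarith
                · have harg : y + (Real.pi:ℂ) * Complex.I
                      - (((w.re : ℝ) : ℂ) + Real.pi * Complex.I) = y - w := by
                    apply Complex.ext <;> simp [h0]
                  rw [harg]; exact hyρ
              rw [hS0', inv_zero]
          exact ((analyticAt_const.congr hzero).meromorphicAt)
        · obtain ⟨ε, hε0, hεne⟩ := SneNbhd hcont (((w.re : ℝ) : ℂ) + Real.pi * Complex.I)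
            ⟨by simp [hπ.le], by simp⟩ (by rw [← Srel hrel w.re]; exact inv_ne_zero hS0)
          set r : ℝ := min ε Real.pi with hrdef
          have hr0 : (0:ℝ) < r := lt_min hε0 hπ
          have hrε : r ≤ ε := min_le_left _ _
          have hrπ : r ≤ Real.pi := min_le_right _ _
          have hwre : w = ((w.re : ℝ) : ℂ) := Complex.ext rfl (by simp [h0])
          have hdist : ∀ y : ℂ, ‖y - w‖ < r →
              ‖y + (Real.pi:ℂ) * Complex.I
                - (((w.re : ℝ) : ℂ) + Real.pi * Complex.I)‖ < r := by
            intro y hy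
            have harg : y + (Real.pi:ℂ) * Complex.I
                - (((w.re : ℝ) : ℂ) + Real.pi * Complex.I) = y - w := by
              apply Complex.ext <;> simp [h0]
            rw [harg]; exact hy
          have key : AnalyticAt ℂ
              (fun y : ℂ => if (0:ℝ) ≤ y.im then S y
                else (S (y + Real.pi * Complex.I))⁻¹) w := by
            apply glueAux (c := 0) Metric.isOpen_ball ?_ ?_ ?_ ?_ ?_ (Metric.mem_ball_self hr0)
            · apply hcont.mono
              rintro y ⟨hy1, hy2⟩
              rw [Metric.mem_ball, Complex.dist_eq] at hy1
              refine ⟨hy2, ?_⟩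
              have : |y.im| ≤ ‖y - w‖ := by
                simpa [Complex.sub_im, h0] using Complex.abs_im_le_norm (y - w)
              have := lt_of_le_of_lt this (lt_of_lt_of_le hy1 hrπ)
              exact le_of_lt (lt_of_le_of_lt (le_abs_self _) this)
            · intro y hy
              obtain ⟨hy1, hy2⟩ := hy
              rw [Metric.mem_ball, Complex.dist_eq] at hy1
              have hy2' : y.im ≤ 0 := hy2
              have hyb : |y.im| ≤ ‖y - w‖ := by
                simpa [Complex.sub_im, h0] using Complex.abs_im_le_norm (y - w)
              have hybr : |y.im| < r := lt_of_le_of_lt hyb hy1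
              have himy : (y + (Real.pi:ℂ) * Complex.I).im = y.im + Real.pi := by simp
              have hmaps : Set.MapsTo (fun u : ℂ => u + (Real.pi:ℂ) * Complex.I)
                  (Metric.ball w r ∩ {w : ℂ | w.im ≤ 0})
                  {ζ : ℂ | 0 ≤ ζ.im ∧ ζ.im ≤ Real.pi} := by
                intro u hu
                obtain ⟨hu1, hu2⟩ := hu
                rw [Metric.mem_ball, Complex.dist_eq] at hu1
                have hu2' : u.im ≤ 0 := hu2
                have hub : |u.im| ≤ ‖u - w‖ := by
                  simpa [Complex.sub_im, h0] using Complex.abs_im_le_norm (u - w)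
                have hubr : |u.im| < r := lt_of_le_of_lt hub hu1
                have himu : (u + (Real.pi:ℂ) * Complex.I).im = u.im + Real.pi := by simp
                constructor
                · rw [himu]; have := (abs_lt.1 hubr).1; linarith [hrπ]
                · rw [himu]; linarith
              have hinner : ContinuousOn (fun u : ℂ => S (u + (Real.pi:ℂ) * Complex.I))
                  (Metric.ball w r ∩ {w : ℂ | w.im ≤ 0}) := by
                exact ContinuousOn.comp (g := S)
                  (f := fun u : ℂ => u + (Real.pi:ℂ) * Complex.I) hcont
                  ((continuous_id.add continuous_const).continuousOn) hmaps
              apply ContinuousWithinAt.inv₀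
              · exact hinner y ⟨Metric.mem_ball.2 (by rw [Complex.dist_eq]; exact hy1), hy2⟩
              · exact hεne (y + (Real.pi:ℂ) * Complex.I)
                  (by rw [himy]; have := (abs_lt.1 hybr).1; linarith [hrπ])
                  (by rw [himy]; linarith)
                  (lt_of_lt_of_le (hdist y hy1) hrε)
            · intro y hy hy0
              have hyre : y = ((y.re : ℝ) : ℂ) := Complex.ext rfl (by simp [hy0])
              rw [hyre]
              exact (Srel' hrel y.re).symm
            · intro y hy hy0
              rw [Metric.mem_ball, Complex.dist_eq] at hy
              have hyb : |y.im| ≤ ‖y - w‖ := by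
                simpa [Complex.sub_im, h0] using Complex.abs_im_le_norm (y - w)
              have hybr : |y.im| < r := lt_of_le_of_lt hyb hy
              exact hanal.differentiableAt (hOpen.mem_nhds
                ⟨hy0, lt_of_le_of_lt (le_abs_self _) (lt_of_lt_of_le hybr hrπ)⟩)
            · intro y hy hy0
              rw [Metric.mem_ball, Complex.dist_eq] at hy
              have hyb : |y.im| ≤ ‖y - w‖ := by
                simpa [Complex.sub_im, h0] using Complex.abs_im_le_norm (y - w)
              have hybr : |y.im| < r := lt_of_le_of_lt hyb hy
              have himy : (y + (Real.pi:ℂ) * Complex.I).im = y.im + Real.pi := by simp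
              have hdS : DifferentiableAt ℂ S (y + (Real.pi:ℂ) * Complex.I) :=
                hanal.differentiableAt (hOpen.mem_nhds
                  ⟨by rw [himy]; have := (abs_lt.1 hybr).1; linarith [hrπ],
                   by rw [himy]; linarith⟩)
              have hcomp : DifferentiableAt ℂ (fun u : ℂ => S (u + (Real.pi:ℂ) * Complex.I)) y :=
                hdS.comp y (differentiableAt_id.add (differentiableAt_const _))
              exact hcomp.inv (hεne (y + (Real.pi:ℂ) * Complex.I)
                (by rw [himy]; have := (abs_lt.1 hybr).1; linarith [hrπ])
                (by rw [himy]; linarith)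
                (lt_of_lt_of_le (hdist y hy) hrε))
          have heq : (fun y : ℂ => if (0:ℝ) ≤ y.im then S y
              else (S (y + Real.pi * Complex.I))⁻¹) =ᶠ[𝓝 w] T := by
            filter_upwards [Metric.ball_mem_nhds w hr0] with y hy
            rw [Metric.mem_ball, Complex.dist_eq] at hy
            have hyb : |y.im| ≤ ‖y - w‖ := by
              simpa [Complex.sub_im, h0] using Complex.abs_im_le_norm (y - w)
            have hybr : |y.im| < Real.pi := lt_of_le_of_lt hyb (lt_of_lt_of_le hy hrπ)
            rcases le_or_gt 0 y.im with h | h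
            · rw [if_pos h, hT1 y h (lt_of_le_of_lt (le_abs_self _) hybr)]
            · rw [if_neg (not_le.2 h), hT2 y (by have := (abs_lt.1 hybr).1; linarith) h]
          exact ((key.congr heq).meromorphicAt)
      · -- upper open strip
        have hmem : w ∈ {ζ : ℂ | 0 < ζ.im ∧ ζ.im < Real.pi} := ⟨h0, hw2⟩
        have hS : AnalyticAt ℂ S w := hanal.analyticAt (hOpen.mem_nhds hmem)
        have heq : S =ᶠ[𝓝 w] T := by
          filter_upwards [hOpen.mem_nhds hmem] with y hy
          exact (hT1 y hy.1.le hy.2).symm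
        exact ((hS.congr heq).meromorphicAt)
    · -- im w = -π
      have him : w.im = -Real.pi := heqm.symm
      by_cases hS0 : S ((w.re : ℝ) : ℂ) = 0
      · obtain ⟨ρ, hρ0, hlow, hup⟩ := SvanishUpper hanal hcont hrel w.re hS0
        have hzero : (fun _ : ℂ => (0:ℂ)) =ᶠ[𝓝 w] T := by
          filter_upwards [Metric.ball_mem_nhds w
            (show (0:ℝ) < min ρ Real.pi by positivity)] with y hy
          rw [Metric.mem_ball, Complex.dist_eq] at hy
          have hyρ : ‖y - w‖ < ρ := lt_of_lt_of_le hy (min_le_left _ _)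
          have hyim : |y.im + Real.pi| ≤ ‖y - w‖ := by
            simpa [Complex.sub_im, him] using Complex.abs_im_le_norm (y - w)
          have hyπ : |y.im + Real.pi| < Real.pi :=
            lt_of_le_of_lt hyim (lt_of_lt_of_le hy (min_le_right _ _))
          rcases le_or_gt (-Real.pi) y.im with h | h
          · have hyneg : y.im < 0 := by have := (abs_lt.1 hyπ).2; linarith
            rw [hT2 y h hyneg]
            have hS0' : S (y + (Real.pi:ℂ) * Complex.I) = 0 := by
              apply hlow
              · have hh : (y + (Real.pi:ℂ) * Complex.I).im = y.im + Real.pi := by simp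
                rw [hh]; linarith
              · have harg : y + (Real.pi:ℂ) * Complex.I - ((w.re : ℝ) : ℂ) = y - w := by
                  apply Complex.ext <;> simp [him] <;> ring
                rw [harg]; exact hyρ
            rw [hS0', inv_zero]
          · rw [← hTper y]
            have h2im : (y + 2 * (Real.pi:ℂ) * Complex.I).im = y.im + 2 * Real.pi := by simp
            have h2a : 0 ≤ (y + 2 * (Real.pi:ℂ) * Complex.I).im := by
              rw [h2im]; have := (abs_lt.1 hyπ).1; linarith
            have h2b : (y + 2 * (Real.pi:ℂ) * Complex.I).im < Real.pi := by
              rw [h2im]; linarith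
            rw [hT1 _ h2a h2b]
            refine (hup _ ?_ ?_).symm
            · rw [h2im]; linarith
            · have harg : y + 2 * (Real.pi:ℂ) * Complex.I
                  - (((w.re : ℝ) : ℂ) + Real.pi * Complex.I) = y - w := by
                apply Complex.ext <;> simp [him] <;> ring
              rw [harg]; exact hyρ
        exact ((analyticAt_const.congr hzero).meromorphicAt)
      · obtain ⟨ε, hε0, hεne⟩ := SneNbhd hcont ((w.re : ℝ) : ℂ)
          ⟨by simp, by simp [hπ.le]⟩ hS0
        set r : ℝ := min ε Real.pi with hrdef
        have hr0 : (0:ℝ) < r := lt_min hε0 hπ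
        have hrε : r ≤ ε := min_le_left _ _
        have hrπ : r ≤ Real.pi := min_le_right _ _
        have hyimb : ∀ y : ℂ, ‖y - w‖ < r → |y.im + Real.pi| < r := by
          intro y hy
          have : |y.im + Real.pi| ≤ ‖y - w‖ := by
            simpa [Complex.sub_im, him] using Complex.abs_im_le_norm (y - w)
          exact lt_of_le_of_lt this hy
        have hdist1 : ∀ y : ℂ, ‖y - w‖ < r →
            ‖y + (Real.pi:ℂ) * Complex.I - ((w.re : ℝ) : ℂ)‖ < r := by
          intro y hy
          have harg : y + (Real.pi:ℂ) * Complex.I - ((w.re : ℝ) : ℂ) = y - w := by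
            apply Complex.ext <;> simp [him] <;> ring
          rw [harg]; exact hy
        have hdist2 : ∀ y : ℂ, ‖y - w‖ < r →
            ‖y + 2 * (Real.pi:ℂ) * Complex.I
              - (((w.re : ℝ) : ℂ) + Real.pi * Complex.I)‖ < r := by
          intro y hy
          have harg : y + 2 * (Real.pi:ℂ) * Complex.I
              - (((w.re : ℝ) : ℂ) + Real.pi * Complex.I) = y - w := by
            apply Complex.ext <;> simp [him] <;> ring
          rw [harg]; exact hy
        have key : AnalyticAt ℂ
            (fun y : ℂ => if -Real.pi ≤ y.im then (S (y + Real.pi * Complex.I))⁻¹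
              else S (y + 2 * Real.pi * Complex.I)) w := by
          apply glueAux (c := -Real.pi) Metric.isOpen_ball ?_ ?_ ?_ ?_ ?_
            (Metric.mem_ball_self hr0)
          · -- hu : continuity of the inverse piece on the upper side
            intro y hy
            obtain ⟨hy1, hy2⟩ := hy
            rw [Metric.mem_ball, Complex.dist_eq] at hy1
            have hy2' : -Real.pi ≤ y.im := hy2
            have hyb := hyimb y hy1
            have himy : (y + (Real.pi:ℂ) * Complex.I).im = y.im + Real.pi := by simp
            have hmaps : Set.MapsTo (fun u : ℂ => u + (Real.pi:ℂ) * Complex.I)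
                (Metric.ball w r ∩ {w : ℂ | -Real.pi ≤ w.im})
                {ζ : ℂ | 0 ≤ ζ.im ∧ ζ.im ≤ Real.pi} := by
              intro u hu
              obtain ⟨hu1, hu2⟩ := hu
              rw [Metric.mem_ball, Complex.dist_eq] at hu1
              have hu2' : -Real.pi ≤ u.im := hu2
              have hub := hyimb u hu1
              have himu : (u + (Real.pi:ℂ) * Complex.I).im = u.im + Real.pi := by simp
              constructor
              · rw [himu]; linarith
              · rw [himu]; have := (abs_lt.1 hub).2; linarith [hrπ]
            have hinner : ContinuousOn (fun u : ℂ => S (u + (Real.pi:ℂ) * Complex.I))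
                (Metric.ball w r ∩ {w : ℂ | -Real.pi ≤ w.im}) := by
              exact ContinuousOn.comp (g := S)
                (f := fun u : ℂ => u + (Real.pi:ℂ) * Complex.I) hcont
                ((continuous_id.add continuous_const).continuousOn) hmaps
            apply ContinuousWithinAt.inv₀
            · exact hinner y ⟨Metric.mem_ball.2 (by rw [Complex.dist_eq]; exact hy1), hy2⟩
            · exact hεne (y + (Real.pi:ℂ) * Complex.I)
                (by rw [himy]; linarith)
                (by rw [himy]; have := (abs_lt.1 hyb).2; linarith [hrπ])
                (lt_of_lt_of_le (hdist1 y hy1) hrε)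
          · -- hv : continuity of the shifted piece on the lower side
            have hmaps : Set.MapsTo (fun u : ℂ => u + 2 * (Real.pi:ℂ) * Complex.I)
                (Metric.ball w r ∩ {w : ℂ | w.im ≤ -Real.pi})
                {ζ : ℂ | 0 ≤ ζ.im ∧ ζ.im ≤ Real.pi} := by
              intro u hu
              obtain ⟨hu1, hu2⟩ := hu
              rw [Metric.mem_ball, Complex.dist_eq] at hu1
              have hu2' : u.im ≤ -Real.pi := hu2
              have hub := hyimb u hu1
              have himu : (u + 2 * (Real.pi:ℂ) * Complex.I).im = u.im + 2 * Real.pi := by simp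
              constructor
              · rw [himu]; have := (abs_lt.1 hub).1; linarith [hrπ]
              · rw [himu]; linarith
            exact ContinuousOn.comp (g := S)
              (f := fun u : ℂ => u + 2 * (Real.pi:ℂ) * Complex.I) hcont
              ((continuous_id.add continuous_const).continuousOn) hmaps
          · -- huv
            intro y hy hy0
            have h1 : y + (Real.pi:ℂ) * Complex.I = ((y.re : ℝ) : ℂ) := by
              apply Complex.ext <;> simp [hy0]
            have h2 : y + 2 * (Real.pi:ℂ) * Complex.I
                = ((y.re : ℝ) : ℂ) + Real.pi * Complex.I := by
              apply Complex.ext <;> simp [hy0] <;> ring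
            rw [h1, h2]
            exact Srel hrel y.re
          · -- hud
            intro y hy hy0
            rw [Metric.mem_ball, Complex.dist_eq] at hy
            have hyb := hyimb y hy
            have himy : (y + (Real.pi:ℂ) * Complex.I).im = y.im + Real.pi := by simp
            have hdS : DifferentiableAt ℂ S (y + (Real.pi:ℂ) * Complex.I) :=
              hanal.differentiableAt (hOpen.mem_nhds
                ⟨by rw [himy]; linarith,
                 by rw [himy]; have := (abs_lt.1 hyb).2; linarith [hrπ]⟩)
            have hcomp : DifferentiableAt ℂ (fun u : ℂ => S (u + (Real.pi:ℂ) * Complex.I)) y :=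
              hdS.comp y (differentiableAt_id.add (differentiableAt_const _))
            exact hcomp.inv (hεne (y + (Real.pi:ℂ) * Complex.I)
              (by rw [himy]; linarith)
              (by rw [himy]; have := (abs_lt.1 hyb).2; linarith [hrπ])
              (lt_of_lt_of_le (hdist1 y hy) hrε))
          · -- hvd
            intro y hy hy0
            rw [Metric.mem_ball, Complex.dist_eq] at hy
            have hyb := hyimb y hy
            have himy : (y + 2 * (Real.pi:ℂ) * Complex.I).im = y.im + 2 * Real.pi := by simp
            have hdS : DifferentiableAt ℂ S (y + 2 * (Real.pi:ℂ) * Complex.I) :=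
              hanal.differentiableAt (hOpen.mem_nhds
                ⟨by rw [himy]; have := (abs_lt.1 hyb).1; linarith [hrπ],
                 by rw [himy]; linarith⟩)
            exact hdS.comp y (differentiableAt_id.add (differentiableAt_const _))
        have heq : (fun y : ℂ => if -Real.pi ≤ y.im then (S (y + Real.pi * Complex.I))⁻¹
            else S (y + 2 * Real.pi * Complex.I)) =ᶠ[𝓝 w] T := by
          filter_upwards [Metric.ball_mem_nhds w hr0] with y hy
          rw [Metric.mem_ball, Complex.dist_eq] at hy
          have hyb := hyimb y hy
          rcases le_or_gt (-Real.pi) y.im with h | h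
          · rw [if_pos h, hT2 y h (by have := (abs_lt.1 hyb).2; linarith [hrπ])]
          · rw [if_neg (not_le.2 h), ← hTper y]
            have h2im : (y + 2 * (Real.pi:ℂ) * Complex.I).im = y.im + 2 * Real.pi := by simp
            rw [hT1 _ (by rw [h2im]; have := (abs_lt.1 hyb).1; linarith [hrπ])
              (by rw [h2im]; linarith)]
        exact ((key.congr heq).meromorphicAt)
  -- reduce the general point to the fundamental strip by periodicity
  have h2π : (0:ℝ) < 2 * Real.pi := by positivity
  have hb1 := Int.sub_floor_div_mul_nonneg (z.im + Real.pi) h2π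
  have hb2 := Int.sub_floor_div_mul_lt (z.im + Real.pi) h2π
  set n : ℤ := k z with hndef
  have hkn : (n : ℝ) = ((⌊(z.im + Real.pi) / (2 * Real.pi)⌋ : ℤ) : ℝ) := by rw [hndef, hkdef]
  have himz : (z + (-(n:ℂ)) * (2 * (Real.pi:ℂ) * Complex.I)).im
      = z.im - 2 * Real.pi * (n : ℝ) := by
    simp [Complex.add_im, Complex.mul_im, Complex.mul_re]
    ring
  have hz' : MeromorphicAt T (z + (-(n:ℂ)) * (2 * (Real.pi:ℂ) * Complex.I)) := by
    apply main
    · rw [himz, hkn]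
      linarith [mul_comm ((⌊(z.im + Real.pi) / (2 * Real.pi)⌋ : ℤ) : ℝ) (2 * Real.pi)]
    · rw [himz, hkn]
      linarith [mul_comm ((⌊(z.im + Real.pi) / (2 * Real.pi)⌋ : ℤ) : ℝ) (2 * Real.pi)]
  obtain ⟨m, hm⟩ := hz'
  have htr : AnalyticAt ℂ (fun u : ℂ => u + (-(n:ℂ)) * (2 * (Real.pi:ℂ) * Complex.I)) z := by
    exact analyticAt_id.add analyticAt_const
  have hcomp := hm.comp_of_eq htr rfl
  refine ⟨m, hcomp.congr (Filter.Eventually.of_forall (fun u => ?_))⟩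
  simp only [Function.comp]
  have hper : T (u + (-(n:ℂ)) * (2 * (Real.pi:ℂ) * Complex.I)) = T u := by
    have := hTperZ (-n) u
    rwa [show ((-n : ℤ) : ℂ) = -(n:ℂ) by push_cast; ring] at this
  rw [hper]
  rw [show (u + (-(n:ℂ)) * (2 * (Real.pi:ℂ) * Complex.I))
      - (z + (-(n:ℂ)) * (2 * (Real.pi:ℂ) * Complex.I)) = u - z from by ring]
end

section
/- Let K : S(0,π) → ℂ be analytic satisfying |K(ξ+iλ)| ≤ c·e^{c'ω(cosh ξ)}/(λ(π−λ))^{m/2} for 0 < λ < π, where ω is monotone. Fix ℓ > m/2 and define K^{(−ℓ)} as the ℓ-th iterated antiderivative of K along horizontal directions with K^{(−j)}(iπ/2) = 0 for j = 1,…,ℓ. Then there is c'' > 0 with |K^{(−ℓ)}(ξ+iλ)| ≤ c''·(1+|ξ|)^ℓ·e^{c'ω(cosh ξ)} for all 0 < λ < π. -/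
open Set Filter Topology

lemma key_int {g f : ℝ → ℂ} {a b : ℝ} (hab : a ≤ b)
    (hg : ∀ μ ∈ Set.Icc a b, HasDerivAt g (f μ) μ)
    (hf : ContinuousOn f (Set.Icc a b))
    {φ : ℝ → ℝ} (hφ : ∀ μ ∈ Set.Icc a b, ‖f μ‖ ≤ φ μ)
    (hφc : ContinuousOn φ (Set.Icc a b)) :
    ‖g b - g a‖ ≤ ∫ μ in a..b, φ μ := by
  have huicc : Set.uIcc a b = Set.Icc a b := Set.uIcc_of_le hab
  have hfi : IntervalIntegrable f MeasureTheory.volume a b :=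
    (huicc ▸ hf).intervalIntegrable
  rw [← intervalIntegral.integral_eq_sub_of_hasDerivAt (huicc ▸ hg) hfi]
  calc ‖∫ μ in a..b, f μ‖ ≤ ∫ μ in a..b, ‖f μ‖ :=
        intervalIntegral.norm_integral_le_integral_norm hab
    _ ≤ ∫ μ in a..b, φ μ :=
        intervalIntegral.integral_mono_on hab hfi.norm (huicc ▸ hφc).intervalIntegrable
          (fun x hx => by exact hφ x hx)

lemma base_int {s t : ℝ} (hs0 : 0 < s) (hs1 : s ≠ 1) (ht : 0 < t) (htb : t ≤ Real.pi / 2) :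
    ∫ μ in t..(Real.pi / 2), μ ^ (-s) ≤
      (Real.pi / 2 + 1) / |1 - s| * t ^ (-(max (s - 1) 0)) := by
  have hpi := Real.pi_gt_three
  have h2 : (0:ℝ) ∉ Set.uIcc t (Real.pi / 2) := by
    rw [Set.uIcc_of_le htb]
    intro h
    exact absurd (Set.mem_Icc.mp h).1 (not_le.mpr ht)
  have hr : (-s : ℝ) ≠ -1 := fun h => hs1 (by linarith [neg_injective h])
  have hval : ∫ μ in t..(Real.pi/2), μ ^ (-s) =
      ((Real.pi/2) ^ (-s+1) - t ^ (-s+1)) / (-s+1) := integral_rpow (Or.inr ⟨hr, h2⟩)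
  rw [hval]
  rcases lt_or_gt_of_ne hs1 with h | h
  · -- s < 1
    have hmax : max (s-1) 0 = 0 := max_eq_right (by linarith)
    rw [hmax, neg_zero, Real.rpow_zero, mul_one]
    have habs : |1 - s| = 1 - s := abs_of_pos (by linarith)
    rw [habs]
    have h1 : (Real.pi/2) ^ (-s+1) ≤ Real.pi/2 + 1 := by
      calc (Real.pi/2) ^ (-s+1) ≤ (Real.pi/2) ^ (1:ℝ) :=
            Real.rpow_le_rpow_of_exponent_le (by linarith) (by linarith)
        _ = Real.pi/2 := Real.rpow_one _
        _ ≤ Real.pi/2 + 1 := by linarith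
    have h2' : (0:ℝ) ≤ t ^ (-s+1) := (Real.rpow_pos_of_pos ht _).le
    rw [div_le_div_iff₀ (by linarith) (by linarith)]
    nlinarith
  · -- s > 1
    have hmax : max (s-1) 0 = s - 1 := max_eq_left (by linarith)
    rw [hmax]
    have habs : |1 - s| = s - 1 := by rw [abs_of_neg (by linarith)]; ring
    rw [habs]
    have hts : t ^ (-s+1) = t ^ (-(s-1)) := by ring_nf
    have hp2 : (0:ℝ) < (Real.pi/2) ^ (-s+1) := Real.rpow_pos_of_pos (by linarith) _
    have htp : (0:ℝ) < t ^ (-(s-1)) := Real.rpow_pos_of_pos ht _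
    have hQ : ((Real.pi/2) ^ (-s+1) - t ^ (-s+1)) / (-s+1)
        = (t ^ (-s+1) - (Real.pi/2) ^ (-s+1)) / (s-1) := by
      rw [div_eq_div_iff (by linarith) (by linarith)]
      ring
    rw [hQ, hts, div_mul_eq_mul_div, div_le_div_iff₀ (by linarith) (by linarith)]
    nlinarith [mul_pos hp2 (show (0:ℝ) < s - 1 by linarith),
      mul_pos (mul_pos (show (0:ℝ) < Real.pi/2 by linarith) htp)
        (show (0:ℝ) < s - 1 by linarith)]

lemma pow_transfer {e t x : ℝ} (he : 0 ≤ e) (ht : 0 < t) (hx : 0 < x)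
    (hxt : x ≤ t * Real.pi) : t ^ (-e) ≤ Real.pi ^ e * x ^ (-e) := by
  have hpi := Real.pi_pos
  have h1 : x ^ e ≤ (t * Real.pi) ^ e := Real.rpow_le_rpow hx.le hxt he
  have h2 : (t * Real.pi) ^ e = t ^ e * Real.pi ^ e := Real.mul_rpow ht.le hpi.le
  have hxe : (0:ℝ) < x ^ e := Real.rpow_pos_of_pos hx _
  have hte : (0:ℝ) < t ^ e := Real.rpow_pos_of_pos ht _
  have hpe : (0:ℝ) < Real.pi ^ e := Real.rpow_pos_of_pos hpi _
  rw [Real.rpow_neg ht.le, Real.rpow_neg hx.le, inv_eq_one_div, inv_eq_one_div,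
    mul_one_div, div_le_div_iff₀ hte hxe]
  nlinarith


set_option maxHeartbeats 1000000 in
/-- Iterated antiderivatives remove the boundary singularity: if K = K 0 is analytic on
the strip with blow-up rate (λ(π−λ))^{−m/2}, and K (j+1) are successive antiderivatives
vanishing at iπ/2, then for ℓ > m/2 the ℓ-th antiderivative satisfies a
polynomial-times-e^{c'ω(cosh ξ)} bound on the whole strip. -/
theorem stmt_17 (m ℓ : ℕ) (hℓ : (m : ℝ) / 2 < ℓ) (c c' : ℝ) (hc : 0 < c) (hc' : 0 < c')
    (ω : ℝ → ℝ) (hmono : Monotone ω)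
    (K : ℕ → ℂ → ℂ)
    (hanal : DifferentiableOn ℂ (K 0) {ζ | 0 < ζ.im ∧ ζ.im < Real.pi})
    (hbound : ∀ ξ lam : ℝ, 0 < lam → lam < Real.pi →
      ‖K 0 ((ξ : ℂ) + lam * Complex.I)‖ ≤
        c * Real.exp (c' * ω (Real.cosh ξ)) / (lam * (Real.pi - lam)) ^ ((m : ℝ) / 2))
    (hderiv : ∀ j < ℓ, ∀ ζ : ℂ, 0 < ζ.im → ζ.im < Real.pi →
      HasDerivAt (K (j + 1)) (K j ζ) ζ)
    (hzero : ∀ j, 1 ≤ j → j ≤ ℓ → K j ((Real.pi / 2 : ℝ) * Complex.I) = 0) :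
    ∃ c'' > 0, ∀ ξ lam : ℝ, 0 < lam → lam < Real.pi →
      ‖K ℓ ((ξ : ℂ) + lam * Complex.I)‖ ≤
        c'' * (1 + |ξ|) ^ ℓ * Real.exp (c' * ω (Real.cosh ξ)) := by
  have hpi := Real.pi_pos
  have hpi3 := Real.pi_gt_three
  have hSopen : IsOpen {ζ : ℂ | 0 < ζ.im ∧ ζ.im < Real.pi} := by
    have h : {ζ : ℂ | 0 < ζ.im ∧ ζ.im < Real.pi} = Complex.im ⁻¹' (Set.Ioo 0 Real.pi) := rfl
    rw [h]; exact isOpen_Ioo.preimage Complex.continuous_im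
  have hcont : ∀ i, i < ℓ → ∀ ζ : ℂ, 0 < ζ.im → ζ.im < Real.pi → ContinuousAt (K i) ζ := by
    intro i hi ζ h1 h2
    match i with
    | 0 => exact (hanal.differentiableAt (hSopen.mem_nhds ⟨h1, h2⟩)).continuousAt
    | (i' + 1) => exact ((hderiv i' (by omega) ζ h1 h2).differentiableAt).continuousAt
  have hofReal : ∀ t : ℝ, HasDerivAt (fun t : ℝ => (t : ℂ)) 1 t := by
    intro t
    exact Complex.ofRealCLM.hasDerivAt (x := t)
  have him : ∀ ξ μ : ℝ, ((ξ : ℂ) + (μ : ℂ) * Complex.I).im = μ := by intro ξ μ; simp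
  have hdv : ∀ i, i < ℓ → ∀ ξ μ : ℝ, 0 < μ → μ < Real.pi →
      HasDerivAt (fun t : ℝ => K (i + 1) ((ξ : ℂ) + (t : ℂ) * Complex.I))
        (Complex.I * K i ((ξ : ℂ) + (μ : ℂ) * Complex.I)) μ := by
    intro i hi ξ μ h1 h2
    have houter := hderiv i hi ((ξ : ℂ) + (μ : ℂ) * Complex.I)
      (by rw [him]; exact h1) (by rw [him]; exact h2)
    have hinner : HasDerivAt (fun t : ℝ => (ξ : ℂ) + (t : ℂ) * Complex.I) Complex.I μ := by
      simpa using ((hofReal μ).mul_const Complex.I).const_add (ξ : ℂ)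
    have h := HasDerivAt.scomp μ houter hinner
    simpa [Function.comp_def, smul_eq_mul] using h
  have hdh : ∀ i, i < ℓ → ∀ μ : ℝ, 0 < μ → μ < Real.pi → ∀ t : ℝ,
      HasDerivAt (fun t : ℝ => K (i + 1) ((t : ℂ) + (μ : ℂ) * Complex.I))
        (K i ((t : ℂ) + (μ : ℂ) * Complex.I)) t := by
    intro i hi μ h1 h2 t
    have houter := hderiv i hi ((t : ℂ) + (μ : ℂ) * Complex.I)
      (by rw [him]; exact h1) (by rw [him]; exact h2)
    have hinner : HasDerivAt (fun t : ℝ => (t : ℂ) + (μ : ℂ) * Complex.I) 1 t := by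
      simpa using (hofReal t).add_const ((μ : ℂ) * Complex.I)
    have h := HasDerivAt.scomp t houter hinner
    simpa [Function.comp_def, smul_eq_mul] using h
  have hcv : ∀ i, i < ℓ → ∀ ξ a b : ℝ, 0 < a → b < Real.pi →
      ContinuousOn (fun μ : ℝ => Complex.I * K i ((ξ : ℂ) + (μ : ℂ) * Complex.I))
        (Set.Icc a b) := by
    intro i hi ξ a b ha hb μ hμ
    have h1 : 0 < μ := lt_of_lt_of_le ha hμ.1
    have h2 : μ < Real.pi := lt_of_le_of_lt hμ.2 hb
    have hK : ContinuousAt (K i) ((ξ : ℂ) + (μ : ℂ) * Complex.I) :=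
      hcont i hi _ (by rw [him]; exact h1) (by rw [him]; exact h2)
    have hl : Continuous (fun μ : ℝ => (ξ : ℂ) + (μ : ℂ) * Complex.I) := by continuity
    have hKc : ContinuousAt (fun μ : ℝ => K i ((ξ : ℂ) + (μ : ℂ) * Complex.I)) μ := by
      have h := ContinuousAt.comp (f := fun μ : ℝ => (ξ : ℂ) + (μ : ℂ) * Complex.I)
        (g := K i) (x := μ) hK hl.continuousAt
      simpa [Function.comp_def] using h
    exact (continuousAt_const.mul hKc).continuousWithinAt
  have hchz : ∀ i, i < ℓ → ∀ μ : ℝ, 0 < μ → μ < Real.pi → ∀ s : Set ℝ,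
      ContinuousOn (fun t : ℝ => K i ((t : ℂ) + (μ : ℂ) * Complex.I)) s := by
    intro i hi μ h1 h2 s t _
    have hK : ContinuousAt (K i) ((t : ℂ) + (μ : ℂ) * Complex.I) :=
      hcont i hi _ (by rw [him]; exact h1) (by rw [him]; exact h2)
    have hl : Continuous (fun t : ℝ => (t : ℂ) + (μ : ℂ) * Complex.I) := by continuity
    have hKc : ContinuousAt (fun t : ℝ => K i ((t : ℂ) + (μ : ℂ) * Complex.I)) t := by
      have h := ContinuousAt.comp (f := fun t : ℝ => (t : ℂ) + (μ : ℂ) * Complex.I)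
        (g := K i) (x := t) hK hl.continuousAt
      simpa [Function.comp_def] using h
    exact hKc.continuousWithinAt
  have hE : ∀ t ξ : ℝ, |t| ≤ |ξ| →
      Real.exp (c' * ω (Real.cosh t)) ≤ Real.exp (c' * ω (Real.cosh ξ)) := by
    intro t ξ h
    exact Real.exp_le_exp.mpr
      (mul_le_mul_of_nonneg_left (hmono (Real.cosh_le_cosh.mpr h)) hc'.le)
  -- main induction
  have main : ∀ j, j ≤ ℓ → ∃ C : ℝ, 0 < C ∧ ∀ ξ lam : ℝ, 0 < lam → lam < Real.pi →
      ‖K j ((ξ : ℂ) + (lam : ℂ) * Complex.I)‖ ≤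
        C * (1 + |ξ|) ^ j * Real.exp (c' * ω (Real.cosh ξ)) /
          (lam * (Real.pi - lam)) ^ (max ((m : ℝ) / 2 + 1 / 4 - j) 0) := by
    intro j
    induction j with
    | zero =>
      intro _
      refine ⟨c * ((Real.pi / 2) * (Real.pi - Real.pi / 2)) ^ ((1:ℝ)/4),
        mul_pos hc (Real.rpow_pos_of_pos (by nlinarith) _), ?_⟩
      intro ξ lam h1 h2
      have hx : (0:ℝ) < lam * (Real.pi - lam) := mul_pos h1 (by linarith)
      have hx4 : lam * (Real.pi - lam) ≤ (Real.pi / 2) * (Real.pi - Real.pi / 2) := by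
        nlinarith [sq_nonneg (lam - Real.pi / 2)]
      have hq : (lam * (Real.pi - lam)) ^ ((1:ℝ)/4)
          ≤ ((Real.pi / 2) * (Real.pi - Real.pi / 2)) ^ ((1:ℝ)/4) :=
        Real.rpow_le_rpow hx.le hx4 (by norm_num)
      have hmax : max ((m : ℝ) / 2 + 1 / 4 - (0:ℕ)) 0 = (m:ℝ)/2 + 1/4 := by
        rw [Nat.cast_zero, sub_zero]
        exact max_eq_left (by positivity)
      rw [hmax, pow_zero, mul_one]
      have hsplit : (lam * (Real.pi - lam)) ^ ((m:ℝ)/2 + 1/4)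
          = (lam * (Real.pi - lam)) ^ ((m:ℝ)/2) * (lam * (Real.pi - lam)) ^ ((1:ℝ)/4) := by
        rw [← Real.rpow_add hx]
      have hEpos : (0:ℝ) < Real.exp (c' * ω (Real.cosh ξ)) := Real.exp_pos _
      have hb := hbound ξ lam h1 h2
      refine le_trans hb ?_
      rw [hsplit, div_le_div_iff₀ (by positivity) (by positivity)]
      have hd1 : (0:ℝ) < (lam * (Real.pi - lam)) ^ ((m:ℝ)/2) := Real.rpow_pos_of_pos hx _
      have hd2 : (0:ℝ) < (lam * (Real.pi - lam)) ^ ((1:ℝ)/4) := Real.rpow_pos_of_pos hx _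
      nlinarith [mul_pos hEpos hd1, mul_pos (mul_pos hc hEpos) hd1]
    | succ j ih =>
      intro hj1
      have hjl : j < ℓ := by omega
      obtain ⟨C, hC, hCb⟩ := ih (by omega)
      set s : ℝ := (m : ℝ) / 2 + 1 / 4 - j with hsdef
      have hs1 : s ≠ 1 := by
        intro h
        have h4 : 2 * (m : ℝ) + 1 = 4 * (j : ℝ) + 4 := by
          rw [hsdef] at h; linarith
        have h5 : (2 * m + 1 : ℕ) = (4 * j + 4 : ℕ) := by exact_mod_cast h4
        omega
      have hd0 : (0:ℝ) < ((Real.pi / 2) * (Real.pi - Real.pi / 2)) ^ (max s 0) :=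
        Real.rpow_pos_of_pos (by nlinarith) _
      have hpih1 : (0:ℝ) < Real.pi / 2 := by linarith
      have hpih2 : Real.pi / 2 < Real.pi := by linarith
      -- horizontal bound at height π/2
      have hhor : ∀ ξ : ℝ,
          ‖K (j + 1) ((ξ : ℂ) + ((Real.pi / 2 : ℝ) : ℂ) * Complex.I)‖ ≤
            C / ((Real.pi / 2) * (Real.pi - Real.pi / 2)) ^ (max s 0) * (1 + |ξ|) ^ (j + 1) *
              Real.exp (c' * ω (Real.cosh ξ)) := by
        intro ξ
        set Cb := C * (1 + |ξ|) ^ j * Real.exp (c' * ω (Real.cosh ξ)) /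
          ((Real.pi / 2) * (Real.pi - Real.pi / 2)) ^ (max s 0) with hCbdef
        have hCbpos : 0 < Cb := by positivity
        have hb : ∀ t : ℝ, |t| ≤ |ξ| →
            ‖K j ((t : ℂ) + ((Real.pi / 2 : ℝ) : ℂ) * Complex.I)‖ ≤ Cb := by
          intro t hta
          refine le_trans (hCb t (Real.pi / 2) hpih1 hpih2) ?_
          rw [hCbdef]
          have hp : (1 + |t|) ^ j ≤ (1 + |ξ|) ^ j :=
            pow_le_pow_left₀ (by positivity) (by linarith [hta]) j
          have hEt := hE t ξ hta
          have hnum : C * (1 + |t|) ^ j * Real.exp (c' * ω (Real.cosh t)) ≤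
              C * (1 + |ξ|) ^ j * Real.exp (c' * ω (Real.cosh ξ)) :=
            mul_le_mul (mul_le_mul le_rfl hp (by positivity) hC.le) hEt (by positivity)
              (by positivity)
          exact (div_le_div_iff_of_pos_right hd0).mpr hnum
        have hzero' : K (j + 1) (((0 : ℝ) : ℂ) + ((Real.pi / 2 : ℝ) : ℂ) * Complex.I) = 0 := by
          rw [show ((0 : ℝ) : ℂ) = 0 by norm_num, zero_add]
          exact hzero (j + 1) (by omega) (by omega)
        have hfin : ∀ u : ℝ, |ξ| * Cb = u → (1 + |ξ|) * Cb =
            C / ((Real.pi / 2) * (Real.pi - Real.pi / 2)) ^ (max s 0) * (1 + |ξ|) ^ (j + 1) *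
              Real.exp (c' * ω (Real.cosh ξ)) → True := fun _ _ _ => trivial
        have h2' : (1 + |ξ|) * Cb =
            C / ((Real.pi / 2) * (Real.pi - Real.pi / 2)) ^ (max s 0) * (1 + |ξ|) ^ (j + 1) *
              Real.exp (c' * ω (Real.cosh ξ)) := by
          rw [hCbdef, pow_succ]
          field_simp
        rcases le_total 0 ξ with hxs | hxs
        · have hk := key_int (g := fun t : ℝ => K (j + 1) ((t : ℂ) + ((Real.pi / 2 : ℝ) : ℂ) * Complex.I))
            (f := fun t : ℝ => K j ((t : ℂ) + ((Real.pi / 2 : ℝ) : ℂ) * Complex.I))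
            (a := 0) (b := ξ) hxs
            (fun μ _ => hdh j hjl _ hpih1 hpih2 μ)
            (hchz j hjl _ hpih1 hpih2 _)
            (φ := fun _ => Cb)
            (fun μ hμ => hb μ (by
              rw [abs_of_nonneg hμ.1, abs_of_nonneg hxs]; exact hμ.2))
            continuousOn_const
          rw [intervalIntegral.integral_const, smul_eq_mul] at hk
          have hg0 : (fun t : ℝ => K (j + 1) ((t : ℂ) + ((Real.pi / 2 : ℝ) : ℂ) * Complex.I)) 0
              = 0 := hzero'
          rw [hzero', sub_zero] at hk
          calc ‖K (j + 1) ((ξ : ℂ) + ((Real.pi / 2 : ℝ) : ℂ) * Complex.I)‖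
              ≤ (ξ - 0) * Cb := hk
            _ ≤ (1 + |ξ|) * Cb := by nlinarith [le_abs_self ξ]
            _ = _ := h2'
        · have hk := key_int (g := fun t : ℝ => K (j + 1) ((t : ℂ) + ((Real.pi / 2 : ℝ) : ℂ) * Complex.I))
            (f := fun t : ℝ => K j ((t : ℂ) + ((Real.pi / 2 : ℝ) : ℂ) * Complex.I))
            (a := ξ) (b := 0) hxs
            (fun μ _ => hdh j hjl _ hpih1 hpih2 μ)
            (hchz j hjl _ hpih1 hpih2 _)
            (φ := fun _ => Cb)
            (fun μ hμ => hb μ (by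
              rw [abs_of_nonpos hμ.2, abs_of_nonpos hxs]; linarith [hμ.1]))
            continuousOn_const
          rw [intervalIntegral.integral_const, smul_eq_mul] at hk
          have hg0 : (fun t : ℝ => K (j + 1) ((t : ℂ) + ((Real.pi / 2 : ℝ) : ℂ) * Complex.I)) 0
              = 0 := hzero'
          rw [hzero', zero_sub, norm_neg] at hk
          calc ‖K (j + 1) ((ξ : ℂ) + ((Real.pi / 2 : ℝ) : ℂ) * Complex.I)‖
              ≤ (0 - ξ) * Cb := hk
            _ ≤ (1 + |ξ|) * Cb := by nlinarith [neg_le_abs ξ]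
            _ = _ := h2'
      -- vertical estimate
      have habsI : ∀ z : ℂ, ‖Complex.I * z‖ = ‖z‖ := by
        intro z; rw [norm_mul, Complex.norm_I, one_mul]
      have hver : ∃ Cv : ℝ, 0 < Cv ∧ ∀ ξ lam : ℝ, 0 < lam → lam < Real.pi →
          ‖K (j + 1) ((ξ : ℂ) + (lam : ℂ) * Complex.I) -
              K (j + 1) ((ξ : ℂ) + ((Real.pi / 2 : ℝ) : ℂ) * Complex.I)‖ ≤
            Cv * (C * (1 + |ξ|) ^ j * Real.exp (c' * ω (Real.cosh ξ))) /
              (lam * (Real.pi - lam)) ^ (max (s - 1) 0) := by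
        rcases le_or_gt s 0 with hs0 | hs0
        · refine ⟨Real.pi, hpi, ?_⟩
          intro ξ lam h1 h2
          have hmax0 : max s 0 = 0 := max_eq_right hs0
          have hmax1 : max (s - 1) 0 = 0 := max_eq_right (by linarith)
          rw [hmax1, Real.rpow_zero, div_one]
          set P := C * (1 + |ξ|) ^ j * Real.exp (c' * ω (Real.cosh ξ)) with hPdef
          have hPpos : 0 < P := by positivity
          have hbnd : ∀ μ : ℝ, 0 < μ → μ < Real.pi →
              ‖Complex.I * K j ((ξ : ℂ) + (μ : ℂ) * Complex.I)‖ ≤ P := by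
            intro μ hμ1 hμ2
            rw [habsI]
            have h := hCb ξ μ hμ1 hμ2
            rwa [hmax0, Real.rpow_zero, div_one] at h
          rcases le_total lam (Real.pi / 2) with hll | hll
          · have hk := key_int (a := lam) (b := Real.pi / 2) hll
              (g := fun μ : ℝ => K (j + 1) ((ξ : ℂ) + (μ : ℂ) * Complex.I))
              (f := fun μ : ℝ => Complex.I * K j ((ξ : ℂ) + (μ : ℂ) * Complex.I))
              (fun μ hμ => hdv j hjl ξ μ (lt_of_lt_of_le h1 hμ.1) (lt_of_le_of_lt hμ.2 hpih2))
              (hcv j hjl ξ lam (Real.pi / 2) h1 hpih2)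
              (φ := fun _ => P)
              (fun μ hμ => hbnd μ (lt_of_lt_of_le h1 hμ.1) (lt_of_le_of_lt hμ.2 hpih2))
              continuousOn_const
            rw [intervalIntegral.integral_const, smul_eq_mul] at hk
            rw [norm_sub_rev]
            calc ‖K (j + 1) ((ξ : ℂ) + ((Real.pi / 2 : ℝ) : ℂ) * Complex.I) -
                  K (j + 1) ((ξ : ℂ) + (lam : ℂ) * Complex.I)‖ ≤ (Real.pi / 2 - lam) * P := hk
              _ ≤ Real.pi * P := by nlinarith
          · have hk := key_int (a := Real.pi / 2) (b := lam) hll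
              (g := fun μ : ℝ => K (j + 1) ((ξ : ℂ) + (μ : ℂ) * Complex.I))
              (f := fun μ : ℝ => Complex.I * K j ((ξ : ℂ) + (μ : ℂ) * Complex.I))
              (fun μ hμ => hdv j hjl ξ μ (lt_of_lt_of_le hpih1 hμ.1) (lt_of_le_of_lt hμ.2 h2))
              (hcv j hjl ξ (Real.pi / 2) lam hpih1 h2)
              (φ := fun _ => P)
              (fun μ hμ => hbnd μ (lt_of_lt_of_le hpih1 hμ.1) (lt_of_le_of_lt hμ.2 h2))
              continuousOn_const
            rw [intervalIntegral.integral_const, smul_eq_mul] at hk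
            calc ‖K (j + 1) ((ξ : ℂ) + (lam : ℂ) * Complex.I) -
                  K (j + 1) ((ξ : ℂ) + ((Real.pi / 2 : ℝ) : ℂ) * Complex.I)‖
                ≤ (lam - Real.pi / 2) * P := hk
              _ ≤ Real.pi * P := by nlinarith
        · have hmaxs : max s 0 = s := max_eq_left hs0.le
          have habs1s : (0:ℝ) < |1 - s| := abs_pos.mpr (sub_ne_zero.mpr (fun h => hs1 h.symm))
          refine ⟨(2 / Real.pi) ^ s * ((Real.pi / 2 + 1) / |1 - s|) * Real.pi ^ (max (s - 1) 0),
            mul_pos (mul_pos (Real.rpow_pos_of_pos (by positivity) _)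
              (div_pos (by linarith) habs1s)) (Real.rpow_pos_of_pos hpi _), ?_⟩
          intro ξ lam h1 h2
          set P := C * (1 + |ξ|) ^ j * Real.exp (c' * ω (Real.cosh ξ)) with hPdef
          have hPpos : 0 < P := by positivity
          have hx : 0 < lam * (Real.pi - lam) := mul_pos h1 (by linarith)
          have he'0 : (0:ℝ) ≤ max (s - 1) 0 := le_max_right _ _
          have hxe : (0:ℝ) < (lam * (Real.pi - lam)) ^ (max (s - 1) 0) :=
            Real.rpow_pos_of_pos hx _
          have h2pi : (2 / Real.pi) = (Real.pi / 2)⁻¹ := (inv_div Real.pi 2).symm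
          rcases le_total lam (Real.pi / 2) with hll | hll
          · have hbnd : ∀ μ ∈ Set.Icc lam (Real.pi / 2),
                ‖Complex.I * K j ((ξ : ℂ) + (μ : ℂ) * Complex.I)‖ ≤
                  P * (2 / Real.pi) ^ s * μ ^ (-s) := by
              intro μ hμ
              have hμ1 : 0 < μ := lt_of_lt_of_le h1 hμ.1
              have hμ2 : μ < Real.pi := lt_of_le_of_lt hμ.2 hpih2
              rw [habsI]
              have h := hCb ξ μ hμ1 hμ2
              rw [hmaxs] at h
              refine le_trans h ?_
              have heq : P * (2 / Real.pi) ^ s * μ ^ (-s) = P / (μ * (Real.pi / 2)) ^ s := by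
                rw [Real.mul_rpow hμ1.le (by linarith), Real.rpow_neg hμ1.le, h2pi,
                  Real.inv_rpow (by linarith)]
                ring
              rw [heq]
              exact div_le_div_of_nonneg_left hPpos.le (Real.rpow_pos_of_pos (by positivity) _)
                (Real.rpow_le_rpow (by positivity) (by nlinarith [hμ.2]) hs0.le)
            have hφc : ContinuousOn (fun μ : ℝ => P * (2 / Real.pi) ^ s * μ ^ (-s))
                (Set.Icc lam (Real.pi / 2)) := by
              refine continuousOn_const.mul (ContinuousOn.rpow_const continuousOn_id ?_)
              intro μ hμ
              exact Or.inl (ne_of_gt (lt_of_lt_of_le h1 hμ.1))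
            have hk := key_int (a := lam) (b := Real.pi / 2) hll
              (g := fun μ : ℝ => K (j + 1) ((ξ : ℂ) + (μ : ℂ) * Complex.I))
              (f := fun μ : ℝ => Complex.I * K j ((ξ : ℂ) + (μ : ℂ) * Complex.I))
              (fun μ hμ => hdv j hjl ξ μ (lt_of_lt_of_le h1 hμ.1) (lt_of_le_of_lt hμ.2 hpih2))
              (hcv j hjl ξ lam (Real.pi / 2) h1 hpih2)
              hbnd hφc
            rw [intervalIntegral.integral_const_mul] at hk
            have hint := base_int hs0 hs1 h1 hll
            have htr := pow_transfer (e := max (s - 1) 0) he'0 h1 hx (by nlinarith)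
            rw [norm_sub_rev]
            calc ‖K (j + 1) ((ξ : ℂ) + ((Real.pi / 2 : ℝ) : ℂ) * Complex.I) -
                  K (j + 1) ((ξ : ℂ) + (lam : ℂ) * Complex.I)‖
                ≤ P * (2 / Real.pi) ^ s * ∫ μ in lam..(Real.pi / 2), μ ^ (-s) := hk
              _ ≤ P * (2 / Real.pi) ^ s *
                  ((Real.pi / 2 + 1) / |1 - s| * lam ^ (-(max (s - 1) 0))) := by
                  apply mul_le_mul_of_nonneg_left hint (by positivity)
              _ ≤ P * (2 / Real.pi) ^ s * ((Real.pi / 2 + 1) / |1 - s| *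
                  (Real.pi ^ (max (s - 1) 0) * (lam * (Real.pi - lam)) ^ (-(max (s - 1) 0)))) := by
                  refine mul_le_mul_of_nonneg_left (mul_le_mul_of_nonneg_left htr ?_)
                    (by positivity)
                  exact div_nonneg (by linarith) (abs_nonneg _)
              _ = (2 / Real.pi) ^ s * ((Real.pi / 2 + 1) / |1 - s|) * Real.pi ^ (max (s - 1) 0) *
                  P / (lam * (Real.pi - lam)) ^ (max (s - 1) 0) := by
                  rw [Real.rpow_neg hx.le]
                  ring
          · have hπl : 0 < Real.pi - lam := by linarith
            have hbnd : ∀ μ ∈ Set.Icc (Real.pi / 2) lam,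
                ‖Complex.I * K j ((ξ : ℂ) + (μ : ℂ) * Complex.I)‖ ≤
                  P * (2 / Real.pi) ^ s * (Real.pi - μ) ^ (-s) := by
              intro μ hμ
              have hμ1 : 0 < μ := lt_of_lt_of_le hpih1 hμ.1
              have hμ2 : μ < Real.pi := lt_of_le_of_lt hμ.2 h2
              have hπμ : 0 < Real.pi - μ := by linarith
              rw [habsI]
              have h := hCb ξ μ hμ1 hμ2
              rw [hmaxs] at h
              refine le_trans h ?_
              have heq : P * (2 / Real.pi) ^ s * (Real.pi - μ) ^ (-s)
                  = P / ((Real.pi - μ) * (Real.pi / 2)) ^ s := by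
                rw [Real.mul_rpow hπμ.le (by linarith), Real.rpow_neg hπμ.le, h2pi,
                  Real.inv_rpow (by linarith)]
                ring
              rw [heq]
              exact div_le_div_of_nonneg_left hPpos.le (Real.rpow_pos_of_pos (by positivity) _)
                (Real.rpow_le_rpow (by positivity) (by nlinarith [hμ.1]) hs0.le)
            have hφc : ContinuousOn (fun μ : ℝ => P * (2 / Real.pi) ^ s * (Real.pi - μ) ^ (-s))
                (Set.Icc (Real.pi / 2) lam) := by
              refine continuousOn_const.mul (ContinuousOn.rpow_const
                ((continuousOn_const.sub continuousOn_id)) ?_)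
              intro μ hμ
              exact Or.inl (ne_of_gt (show (0:ℝ) < Real.pi - μ by linarith [hμ.2]))
            have hk := key_int (a := Real.pi / 2) (b := lam) hll
              (g := fun μ : ℝ => K (j + 1) ((ξ : ℂ) + (μ : ℂ) * Complex.I))
              (f := fun μ : ℝ => Complex.I * K j ((ξ : ℂ) + (μ : ℂ) * Complex.I))
              (fun μ hμ => hdv j hjl ξ μ (lt_of_lt_of_le hpih1 hμ.1) (lt_of_le_of_lt hμ.2 h2))
              (hcv j hjl ξ (Real.pi / 2) lam hpih1 h2)
              hbnd hφc
            rw [intervalIntegral.integral_const_mul] at hk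
            have hsub : (∫ μ in (Real.pi / 2)..lam, (Real.pi - μ) ^ (-s))
                = ∫ ν in (Real.pi - lam)..(Real.pi / 2), ν ^ (-s) := by
              have h := intervalIntegral.integral_comp_sub_left (a := Real.pi / 2) (b := lam)
                (fun ν : ℝ => ν ^ (-s)) Real.pi
              rw [show Real.pi - Real.pi / 2 = Real.pi / 2 by ring] at h
              exact h
            rw [hsub] at hk
            have hint := base_int hs0 hs1 hπl (by linarith)
            have htr := pow_transfer (e := max (s - 1) 0) he'0 hπl hx (by nlinarith)
            calc ‖K (j + 1) ((ξ : ℂ) + (lam : ℂ) * Complex.I) -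
                  K (j + 1) ((ξ : ℂ) + ((Real.pi / 2 : ℝ) : ℂ) * Complex.I)‖
                ≤ P * (2 / Real.pi) ^ s * ∫ ν in (Real.pi - lam)..(Real.pi / 2), ν ^ (-s) := hk
              _ ≤ P * (2 / Real.pi) ^ s *
                  ((Real.pi / 2 + 1) / |1 - s| * (Real.pi - lam) ^ (-(max (s - 1) 0))) := by
                  apply mul_le_mul_of_nonneg_left hint (by positivity)
              _ ≤ P * (2 / Real.pi) ^ s * ((Real.pi / 2 + 1) / |1 - s| *
                  (Real.pi ^ (max (s - 1) 0) * (lam * (Real.pi - lam)) ^ (-(max (s - 1) 0)))) := by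
                  refine mul_le_mul_of_nonneg_left (mul_le_mul_of_nonneg_left htr ?_)
                    (by positivity)
                  exact div_nonneg (by linarith) (abs_nonneg _)
              _ = (2 / Real.pi) ^ s * ((Real.pi / 2 + 1) / |1 - s|) * Real.pi ^ (max (s - 1) 0) *
                  P / (lam * (Real.pi - lam)) ^ (max (s - 1) 0) := by
                  rw [Real.rpow_neg hx.le]
                  ring
      -- assemble step
      obtain ⟨Cv, hCv, hCvb⟩ := hver
      have hd0' : (0:ℝ) < ((Real.pi / 2) * (Real.pi - Real.pi / 2)) ^ (max (s - 1) 0) :=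
        Real.rpow_pos_of_pos (by nlinarith) _
      refine ⟨Cv * C + C / ((Real.pi / 2) * (Real.pi - Real.pi / 2)) ^ (max s 0) *
          ((Real.pi / 2) * (Real.pi - Real.pi / 2)) ^ (max (s - 1) 0),
        add_pos (mul_pos hCv hC) (mul_pos (div_pos hC hd0) hd0'), ?_⟩
      intro ξ lam h1 h2
      have hcasteq : max ((m : ℝ) / 2 + 1 / 4 - ((j + 1 : ℕ) : ℝ)) 0 = max (s - 1) 0 := by
        congr 1
        push_cast
        rw [hsdef]
        ring
      rw [hcasteq]
      have hx : 0 < lam * (Real.pi - lam) := mul_pos h1 (by linarith)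
      have hx4 : lam * (Real.pi - lam) ≤ (Real.pi / 2) * (Real.pi - Real.pi / 2) := by
        nlinarith [sq_nonneg (lam - Real.pi / 2)]
      have he'0 : (0:ℝ) ≤ max (s - 1) 0 := le_max_right _ _
      have hxe : (0:ℝ) < (lam * (Real.pi - lam)) ^ (max (s - 1) 0) := Real.rpow_pos_of_pos hx _
      have hxle : (lam * (Real.pi - lam)) ^ (max (s - 1) 0) ≤
          ((Real.pi / 2) * (Real.pi - Real.pi / 2)) ^ (max (s - 1) 0) :=
        Real.rpow_le_rpow hx.le hx4 he'0
      have htri := norm_add_le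
        (K (j + 1) ((ξ : ℂ) + (lam : ℂ) * Complex.I) -
          K (j + 1) ((ξ : ℂ) + ((Real.pi / 2 : ℝ) : ℂ) * Complex.I))
        (K (j + 1) ((ξ : ℂ) + ((Real.pi / 2 : ℝ) : ℂ) * Complex.I))
      rw [sub_add_cancel] at htri
      have t1 := hCvb ξ lam h1 h2
      have t2 := hhor ξ
      have hEpos : 0 < Real.exp (c' * ω (Real.cosh ξ)) := Real.exp_pos _
      have hpow : (1 + |ξ|) ^ j ≤ (1 + |ξ|) ^ (j + 1) :=
        pow_le_pow_right₀ (by linarith [abs_nonneg ξ]) (Nat.le_succ j)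
      have t1' : ‖K (j + 1) ((ξ : ℂ) + (lam : ℂ) * Complex.I) -
          K (j + 1) ((ξ : ℂ) + ((Real.pi / 2 : ℝ) : ℂ) * Complex.I)‖ ≤
          Cv * C * (1 + |ξ|) ^ (j + 1) * Real.exp (c' * ω (Real.cosh ξ)) /
            (lam * (Real.pi - lam)) ^ (max (s - 1) 0) := by
        refine le_trans t1 ((div_le_div_iff_of_pos_right hxe).mpr ?_)
        nlinarith [mul_le_mul_of_nonneg_left hpow
          (le_of_lt (mul_pos (mul_pos hCv hC) hEpos))]
      have hChnn : (0:ℝ) ≤ C / ((Real.pi / 2) * (Real.pi - Real.pi / 2)) ^ (max s 0) :=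
        div_nonneg hC.le hd0.le
      have t2' : ‖K (j + 1) ((ξ : ℂ) + ((Real.pi / 2 : ℝ) : ℂ) * Complex.I)‖ ≤
          C / ((Real.pi / 2) * (Real.pi - Real.pi / 2)) ^ (max s 0) *
            ((Real.pi / 2) * (Real.pi - Real.pi / 2)) ^ (max (s - 1) 0) *
            (1 + |ξ|) ^ (j + 1) * Real.exp (c' * ω (Real.cosh ξ)) /
            (lam * (Real.pi - lam)) ^ (max (s - 1) 0) := by
        refine le_trans t2 ?_
        have h1' : (1:ℝ) ≤ ((Real.pi / 2) * (Real.pi - Real.pi / 2)) ^ (max (s - 1) 0) /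
            (lam * (Real.pi - lam)) ^ (max (s - 1) 0) := (one_le_div hxe).mpr hxle
        calc C / ((Real.pi / 2) * (Real.pi - Real.pi / 2)) ^ (max s 0) * (1 + |ξ|) ^ (j + 1) *
              Real.exp (c' * ω (Real.cosh ξ))
            = C / ((Real.pi / 2) * (Real.pi - Real.pi / 2)) ^ (max s 0) * (1 + |ξ|) ^ (j + 1) *
              Real.exp (c' * ω (Real.cosh ξ)) * 1 := (mul_one _).symm
          _ ≤ C / ((Real.pi / 2) * (Real.pi - Real.pi / 2)) ^ (max s 0) * (1 + |ξ|) ^ (j + 1) *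
              Real.exp (c' * ω (Real.cosh ξ)) *
              (((Real.pi / 2) * (Real.pi - Real.pi / 2)) ^ (max (s - 1) 0) /
                (lam * (Real.pi - lam)) ^ (max (s - 1) 0)) := by
              refine mul_le_mul_of_nonneg_left h1' ?_
              exact mul_nonneg (mul_nonneg hChnn (by positivity)) hEpos.le
          _ = _ := by ring
      calc ‖K (j + 1) ((ξ : ℂ) + (lam : ℂ) * Complex.I)‖
          ≤ ‖K (j + 1) ((ξ : ℂ) + (lam : ℂ) * Complex.I) -
              K (j + 1) ((ξ : ℂ) + ((Real.pi / 2 : ℝ) : ℂ) * Complex.I)‖ +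
            ‖K (j + 1) ((ξ : ℂ) + ((Real.pi / 2 : ℝ) : ℂ) * Complex.I)‖ := htri
        _ ≤ Cv * C * (1 + |ξ|) ^ (j + 1) * Real.exp (c' * ω (Real.cosh ξ)) /
              (lam * (Real.pi - lam)) ^ (max (s - 1) 0) +
            C / ((Real.pi / 2) * (Real.pi - Real.pi / 2)) ^ (max s 0) *
              ((Real.pi / 2) * (Real.pi - Real.pi / 2)) ^ (max (s - 1) 0) *
              (1 + |ξ|) ^ (j + 1) * Real.exp (c' * ω (Real.cosh ξ)) /
              (lam * (Real.pi - lam)) ^ (max (s - 1) 0) := add_le_add t1' t2'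
        _ = _ := by ring

  obtain ⟨C, hC, hCb⟩ := main ℓ le_rfl
  refine ⟨C, hC, ?_⟩
  intro ξ lam h1 h2
  have hm2 : (m : ℝ) / 2 + 1 / 4 - ℓ ≤ 0 := by
    have hnat : m + 1 ≤ 2 * ℓ := by
      have h' : (m : ℝ) < 2 * ℓ := by linarith
      have h'' : m < 2 * ℓ := by exact_mod_cast h'
      omega
    have h3 : (m : ℝ) + 1 ≤ 2 * ℓ := by exact_mod_cast hnat
    linarith
  have hmax : max ((m : ℝ) / 2 + 1 / 4 - ℓ) 0 = 0 := max_eq_right hm2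
  have h := hCb ξ lam h1 h2
  rwa [hmax, Real.rpow_zero, div_one] at h
end
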